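/- arXiv:1108.1019 — 2 statements merged into one kernel-verified Lean document; each statement's English description precedes it below -/
import Mathlib

section
/- Let (u₀,v₀) be a standard pair and let F₁, F₂ be cdf's satisfying condition (a). Then the following are equivalent: (i) ∫_{-∞}^{c} v₀(F₁(x)) du₀(x) ≥ ∫_{-∞}^{c} v₀(F₂(x)) du₀(x) for all c ∈ ℝ; (ii) ∫_{0}^{p} u₀(F₁⁻¹(α)) dv₀(α) ≤ ∫_{0}^{p} u₀(F₂⁻¹(α)) dv₀(α) for all p ∈ [0,1). -/
open MeasureTheory Set Filter Topology Function

noncomputable section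

/-- A cumulative distribution function: non-decreasing, right-continuous,
with limit 0 at -∞ and limit 1 at +∞. -/
structure IsCDF (F : ℝ → ℝ) : Prop where
  mono : Monotone F
  right_cont : ∀ x, ContinuousWithinAt F (Ici x) x
  tendsto_atBot : Tendsto F atBot (𝓝 0)
  tendsto_atTop : Tendsto F atTop (𝓝 1)

/-- The quantile function `F⁻¹ (α) = inf {x | F x ≥ α}`. -/
def qf (F : ℝ → ℝ) (α : ℝ) : ℝ := sInf {x | α ≤ F x}

/-- `(u₀, v₀)` is a standard pair: `u₀ : ℝ → ℝ` non-decreasing left-continuous,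
`v₀ : [0,1] → [0,1]` non-decreasing right-continuous with `v₀ 0 = 0` and `v₀ (1⁻) = 1`. -/
structure StandardPair (u₀ v₀ : ℝ → ℝ) : Prop where
  u_mono : Monotone u₀
  u_left_cont : ∀ x, ContinuousWithinAt u₀ (Iic x) x
  v_mono : MonotoneOn v₀ (Icc 0 1)
  v_right_cont : ∀ α ∈ Ico (0:ℝ) 1, Tendsto v₀ (𝓝[>] α) (𝓝 (v₀ α))
  v_mem : ∀ α ∈ Icc (0:ℝ) 1, v₀ α ∈ Icc (0:ℝ) 1
  v_zero : v₀ 0 = 0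
  v_one : Tendsto v₀ (𝓝[<] (1:ℝ)) (𝓝 1)

/-- `μ` is the Lebesgue–Stieltjes measure of the left-continuous integrator `g` on `ℝ`:
`μ [a,b) = g b - g a`. -/
def IsLSL (g : ℝ → ℝ) (μ : Measure ℝ) : Prop :=
  ∀ a b : ℝ, a ≤ b → μ (Ico a b) = ENNReal.ofReal (g b - g a)

/-- `μ` is the Lebesgue–Stieltjes measure of the right-continuous integrator `g` on `ℝ`:
`μ (a,b] = g b - g a`. -/
def IsLSR (g : ℝ → ℝ) (μ : Measure ℝ) : Prop :=
  ∀ a b : ℝ, a ≤ b → μ (Ioc a b) = ENNReal.ofReal (g b - g a)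

/-- `μ` behaves on `[0,1]` as the Lebesgue–Stieltjes measure of the right-continuous
integrator `g`: `μ (a,b] = g b - g a` for `0 ≤ a ≤ b ≤ 1`. -/
def IsLSR01 (g : ℝ → ℝ) (μ : Measure ℝ) : Prop :=
  ∀ a b : ℝ, 0 ≤ a → a ≤ b → b ≤ 1 → μ (Ioc a b) = ENNReal.ofReal (g b - g a)

/-- `μ` behaves inside `(0,1)` as the Lebesgue–Stieltjes measure of the left-continuous
integrator `g`: `μ [a,b) = g b - g a` for `0 < a ≤ b < 1`. -/
def IsLSL01 (g : ℝ → ℝ) (μ : Measure ℝ) : Prop :=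
  ∀ a b : ℝ, 0 < a → a ≤ b → b < 1 → μ (Ico a b) = ENNReal.ofReal (g b - g a)

/-- `u` has density `k` with respect to the Stieltjes measure `μ₀` of `u₀`
(left-continuous convention `[a,b)`), i.e. `du = k du₀`:
`u b - u a = ∫_{[a,b)} k dμ₀` for all `a ≤ b`. -/
def HasDensity (u k : ℝ → ℝ) (μ₀ : Measure ℝ) : Prop :=
  ∀ a b : ℝ, a ≤ b → u b - u a = ∫ s in Ico a b, k s ∂μ₀

/-- The upper `(u₀,v₀)`-ordering `F₁ ≺^{(u₀,v₀)} F₂`: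
`∫ v₀(F₁) du ≥ ∫ v₀(F₂) du` for every non-decreasing `u₀`-concave `u`, where such a `u`
is encoded through its Radon–Nikodym density `k = du/du₀` (bounded, non-negative,
non-increasing), so that `du = k dμ₀`.  Here `μ₀` is the Stieltjes measure of `u₀`. -/
def UpperOrder (v₀ F₁ F₂ : ℝ → ℝ) (μ₀ : Measure ℝ) : Prop :=
  ∀ k : ℝ → ℝ, Antitone k → (∀ x, 0 ≤ k x) → (∃ C, ∀ x, k x ≤ C) →
    ∫⁻ x, ENNReal.ofReal (v₀ (F₂ x)) ∂(μ₀.withDensity fun x => ENNReal.ofReal (k x)) ≤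
      ∫⁻ x, ENNReal.ofReal (v₀ (F₁ x)) ∂(μ₀.withDensity fun x => ENNReal.ofReal (k x))

/-- The lower `(u₀,v₀)`-ordering `F₁ ≺_{(u₀,v₀)} F₂`:
`-∫ (1 - v₀(F₁)) du ≥ -∫ (1 - v₀(F₂)) du` for every non-decreasing `u₀`-convex `u`,
encoded through its density `m = du/du₀` (non-negative, non-decreasing). -/
def LowerOrder (v₀ F₁ F₂ : ℝ → ℝ) (μ₀ : Measure ℝ) : Prop :=
  ∀ m : ℝ → ℝ, Monotone m → (∀ x, 0 ≤ m x) →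
    ∫⁻ x, ENNReal.ofReal (1 - v₀ (F₁ x)) ∂(μ₀.withDensity fun x => ENNReal.ofReal (m x)) ≤
      ∫⁻ x, ENNReal.ofReal (1 - v₀ (F₂ x)) ∂(μ₀.withDensity fun x => ENNReal.ofReal (m x))

/-- Condition (a): `∫_ℝ |u₀(x)| dv₀(F(x)) < ∞`, where `ν` is the Stieltjes measure
of `v₀ ∘ F`. -/
def CondA (u₀ : ℝ → ℝ) (ν : Measure ℝ) : Prop :=
  ∫⁻ x, ENNReal.ofReal |u₀ x| ∂ν < ⊤

/-- Condition (b): `∫_{[0,p)} v₀(α) du₀(F⁻¹(α)) < ∞` for all `p < 1`, where `lam` is the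
Stieltjes measure of `u₀ ∘ F⁻¹` on `(0,1)`. -/
def CondB (v₀ : ℝ → ℝ) (lam : Measure ℝ) : Prop :=
  ∀ p : ℝ, p < 1 → ∫⁻ α in Ioo 0 p, ENNReal.ofReal (v₀ α) ∂lam < ⊤

/-- Condition (b)': `∫_ℝ (1 - v₀(F(x))) du₀(x) < ∞`, where `μ₀` is the Stieltjes
measure of `u₀`. -/
def CondB' (v₀ F : ℝ → ℝ) (μ₀ : Measure ℝ) : Prop :=
  ∫⁻ x, ENNReal.ofReal (1 - v₀ (F x)) ∂μ₀ < ⊤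

section QF

variable {F : ℝ → ℝ}

theorem IsCDF.nonneg (hF : IsCDF F) (x : ℝ) : 0 ≤ F x :=
  le_of_tendsto hF.tendsto_atBot (eventually_atBot.2 ⟨x, fun _ hy => hF.mono hy⟩)

theorem IsCDF.le_one (hF : IsCDF F) (x : ℝ) : F x ≤ 1 :=
  ge_of_tendsto hF.tendsto_atTop (eventually_atTop.2 ⟨x, fun _ hy => hF.mono hy⟩)

theorem IsCDF.qf_set_nonempty (hF : IsCDF F) {α : ℝ} (hα : α ∈ Ioo (0:ℝ) 1) :
    {x | α ≤ F x}.Nonempty := by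
  obtain ⟨b, hb⟩ := (hF.tendsto_atTop.eventually (eventually_gt_nhds hα.2)).exists
  exact ⟨b, hb.le⟩

theorem IsCDF.qf_set_bddBelow (hF : IsCDF F) {α : ℝ} (hα : α ∈ Ioo (0:ℝ) 1) :
    BddBelow {x | α ≤ F x} := by
  obtain ⟨a, ha⟩ := (hF.tendsto_atBot.eventually (eventually_lt_nhds hα.1)).exists
  refine ⟨a, fun x hx => ?_⟩
  by_contra hh
  push_neg at hh
  exact absurd (le_trans hx (hF.mono hh.le)) (not_le.2 ha)

theorem IsCDF.le_apply_qf (hF : IsCDF F) {α : ℝ} (hα : α ∈ Ioo (0:ℝ) 1) :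
    α ≤ F (qf F α) := by
  set S := {x | α ≤ F x} with hS
  have hne := hF.qf_set_nonempty hα
  have hbdd := hF.qf_set_bddBelow hα
  have hcl : qf F α ∈ closure S := csInf_mem_closure hne hbdd
  have hsub : S ⊆ Ici (qf F α) := fun x hx => csInf_le hbdd hx
  have hnb : (𝓝[S] (qf F α)).NeBot := mem_closure_iff_nhdsWithin_neBot.1 hcl
  have htd : Tendsto F (𝓝[S] (qf F α)) (𝓝 (F (qf F α))) :=
    (hF.right_cont (qf F α)).mono_left (nhdsWithin_mono _ hsub)
  exact ge_of_tendsto htd (eventually_nhdsWithin_of_forall (fun x hx => hx))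

theorem IsCDF.qf_le_iff (hF : IsCDF F) {α : ℝ} (hα : α ∈ Ioo (0:ℝ) 1) (x : ℝ) :
    qf F α ≤ x ↔ α ≤ F x := by
  constructor
  · intro h
    exact le_trans (hF.le_apply_qf hα) (hF.mono h)
  · intro h
    exact csInf_le (hF.qf_set_bddBelow hα) h

theorem IsCDF.lt_qf_iff (hF : IsCDF F) {α : ℝ} (hα : α ∈ Ioo (0:ℝ) 1) (x : ℝ) :
    x < qf F α ↔ F x < α := by
  rw [← not_le, ← not_le, hF.qf_le_iff hα]

theorem IsCDF.qf_monotoneOn (hF : IsCDF F) : MonotoneOn (qf F) (Ioo (0:ℝ) 1) := by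
  intro a ha b hb hab
  rw [hF.qf_le_iff ha]
  exact le_trans hab (hF.le_apply_qf hb)

end QF
section QH

open Classical in
/-- The quantile function truncated to `(0,1)`. -/
def qh (F : ℝ → ℝ) (α : ℝ) : ℝ := if α ∈ Ioo (0:ℝ) 1 then qf F α else 0

theorem qh_eq {F : ℝ → ℝ} {α : ℝ} (hα : α ∈ Ioo (0:ℝ) 1) : qh F α = qf F α := by
  simp [qh, hα]

theorem IsCDF.qh_measurable {F : ℝ → ℝ} (hF : IsCDF F) : Measurable (qh F) := by
  apply measurable_of_Iic
  intro t
  have hset : qh F ⁻¹' Iic t =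
      (Ioo (0:ℝ) 1 ∩ Iic (F t)) ∪ ((Ioo (0:ℝ) 1)ᶜ ∩ {α : ℝ | (0:ℝ) ≤ t}) := by
    ext α
    by_cases hα : α ∈ Ioo (0:ℝ) 1
    · simp only [mem_preimage, mem_Iic, qh_eq hα, mem_union, mem_inter_iff, mem_compl_iff,
        mem_setOf_eq, hα, not_true_eq_false, false_and, or_false, true_and]
      exact hF.qf_le_iff hα t
    · simp [qh, hα]
  rw [hset]
  refine (measurableSet_Ioo.inter measurableSet_Iic).union (measurableSet_Ioo.compl.inter ?_)
  by_cases h0 : (0:ℝ) ≤ t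
  · simp only [h0, setOf_true]; exact MeasurableSet.univ
  · simp only [h0, setOf_false]; exact MeasurableSet.empty

theorem IsCDF.qh_monotoneOn {F : ℝ → ℝ} (hF : IsCDF F) : MonotoneOn (qh F) (Ioo (0:ℝ) 1) := by
  intro a ha b hb hab
  rw [qh_eq ha, qh_eq hb]
  exact hF.qf_monotoneOn ha hb hab

end QH

section Eta

variable {u₀ v₀ : ℝ → ℝ} {η : Measure ℝ}

theorem StandardPair.v_one_eq (hpair : StandardPair u₀ v₀) : v₀ 1 = 1 := by
  refine le_antisymm (hpair.v_mem 1 ⟨zero_le_one, le_rfl⟩).2 ?_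
  refine le_of_tendsto hpair.v_one ?_
  filter_upwards [Ioo_mem_nhdsLT_of_mem (show (1:ℝ) ∈ Ioc (0:ℝ) 1 from ⟨zero_lt_one, le_rfl⟩)]
    with a ha
  exact hpair.v_mono ⟨ha.1.le, ha.2.le⟩ ⟨zero_le_one, le_rfl⟩ ha.2.le

theorem eta_one (hpair : StandardPair u₀ v₀) (hη : IsLSR01 v₀ η) : η {1} = 0 := by
  have key : ∀ n : ℕ, η {1} ≤ ENNReal.ofReal (1 - v₀ (1 - 1/(n+1))) := by
    intro n
    have h1 : (0:ℝ) < 1/(n+1) := by positivity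
    have h2 : 1/((n:ℝ)+1) ≤ 1 := by
      rw [div_le_one (by positivity)]; linarith [Nat.cast_nonneg (α := ℝ) n]
    have hle : η {1} ≤ η (Ioc (1 - 1/(n+1)) 1) := by
      apply measure_mono
      intro x hx
      rw [mem_singleton_iff] at hx
      subst hx
      exact ⟨by linarith, le_rfl⟩
    rw [hη (1 - 1/(n+1)) 1 (by linarith) (by linarith) le_rfl, hpair.v_one_eq] at hle
    exact hle
  have htd : Tendsto (fun n : ℕ => ENNReal.ofReal (1 - v₀ (1 - 1/(n+1)))) atTop (𝓝 0) := by
    have hseq : Tendsto (fun n : ℕ => 1 - 1/((n:ℝ)+1)) atTop (𝓝[<] 1) := by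
      rw [tendsto_nhdsWithin_iff]
      constructor
      · have := tendsto_one_div_add_atTop_nhds_zero_nat (𝕜 := ℝ)
        have h := tendsto_const_nhds (x := (1:ℝ)) (f := atTop (α := ℕ)) |>.sub this
        simpa using h
      · filter_upwards with n
        have : (0:ℝ) < 1/(n+1) := by positivity
        simp only [mem_Iio]; linarith
    have hv : Tendsto (fun n : ℕ => v₀ (1 - 1/((n:ℝ)+1))) atTop (𝓝 1) :=
      hpair.v_one.comp hseq
    have : Tendsto (fun n : ℕ => 1 - v₀ (1 - 1/((n:ℝ)+1))) atTop (𝓝 0) := by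
      have h := tendsto_const_nhds (x := (1:ℝ)) (f := atTop (α := ℕ)) |>.sub hv
      simpa using h
    have := ENNReal.tendsto_ofReal this
    simpa using this
  have := ge_of_tendsto' htd key
  exact le_antisymm this (zero_le)

theorem eta_Iic_inter (hpair : StandardPair u₀ v₀) (hη : IsLSR01 v₀ η)
    {t : ℝ} (ht0 : 0 ≤ t) (ht1 : t ≤ 1) :
    η (Iic t ∩ Ioo 0 1) = ENNReal.ofReal (v₀ t) := by
  have hset : Iic t ∩ Ioo 0 1 = Ioc 0 t \ {1} := by
    ext α
    simp only [mem_inter_iff, mem_Iic, mem_Ioo, mem_diff, mem_Ioc, mem_singleton_iff]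
    constructor
    · rintro ⟨h1, h2, h3⟩; exact ⟨⟨h2, h1⟩, ne_of_lt h3⟩
    · rintro ⟨⟨h1, h2⟩, h3⟩; exact ⟨h2, h1, lt_of_le_of_ne (le_trans h2 ht1) h3⟩
  rw [hset, measure_diff_null (eta_one hpair hη), hη 0 t le_rfl ht0 ht1, hpair.v_zero, sub_zero]

theorem eta_Ioc_inter (hpair : StandardPair u₀ v₀) (hη : IsLSR01 v₀ η)
    {s t : ℝ} (hs : 0 ≤ s) (hst : s ≤ t) (ht : t ≤ 1) :
    η (Ioc s t ∩ Ioo 0 1) = ENNReal.ofReal (v₀ t - v₀ s) := by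
  have hset : Ioc s t ∩ Ioo 0 1 = Ioc s t \ {1} := by
    ext α
    simp only [mem_inter_iff, mem_Ioc, mem_Ioo, mem_diff, mem_singleton_iff]
    constructor
    · rintro ⟨⟨h1, h2⟩, h3, h4⟩; exact ⟨⟨h1, h2⟩, ne_of_lt h4⟩
    · rintro ⟨⟨h1, h2⟩, h3⟩
      exact ⟨⟨h1, h2⟩, lt_of_le_of_lt hs h1, lt_of_le_of_ne (le_trans h2 ht) h3⟩
  rw [hset, measure_diff_null (eta_one hpair hη), hη s t hs hst ht]

theorem eta_restrict_finite (hpair : StandardPair u₀ v₀) (hη : IsLSR01 v₀ η) :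
    IsFiniteMeasure (η.restrict (Ioo 0 1)) := by
  constructor
  rw [Measure.restrict_apply_univ]
  refine lt_of_le_of_lt (measure_mono Ioo_subset_Ioc_self) ?_
  rw [hη 0 1 le_rfl zero_le_one le_rfl]
  exact ENNReal.ofReal_lt_top

end Eta
section Nu

variable {u₀ v₀ F : ℝ → ℝ} {η ν μ₀ : Measure ℝ}

theorem nu_eq_map (hpair : StandardPair u₀ v₀) (hF : IsCDF F) (hη : IsLSR01 v₀ η)
    (hν : IsLSR (fun x => v₀ (F x)) ν) :
    ν = Measure.map (qh F) (η.restrict (Ioo 0 1)) := by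
  refine Measure.ext_of_Ioc' ν _ (fun a b hab => ?_) (fun a b hab => ?_)
  · rw [hν a b hab.le]; exact ENNReal.ofReal_ne_top
  · rw [Measure.map_apply hF.qh_measurable measurableSet_Ioc,
      Measure.restrict_apply (hF.qh_measurable measurableSet_Ioc)]
    have hset : qh F ⁻¹' Ioc a b ∩ Ioo 0 1 = Ioc (F a) (F b) ∩ Ioo 0 1 := by
      ext α
      simp only [mem_inter_iff, mem_preimage, mem_Ioc, mem_Ioo]
      constructor
      · rintro ⟨⟨h1, h2⟩, hα⟩
        rw [qh_eq hα] at h1 h2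
        refine ⟨⟨?_, ?_⟩, hα⟩
        · exact (hF.lt_qf_iff hα a).1 h1
        · exact (hF.qf_le_iff hα b).1 h2
      · rintro ⟨⟨h1, h2⟩, hα⟩
        rw [qh_eq hα]
        refine ⟨⟨?_, ?_⟩, hα⟩
        · exact (hF.lt_qf_iff hα a).2 h1
        · exact (hF.qf_le_iff hα b).2 h2
    rw [hset, eta_Ioc_inter hpair hη (hF.nonneg a) (hF.mono hab.le) (hF.le_one b),
      hν a b hab.le]

theorem IsLSL.sigmaFinite (hμ₀ : IsLSL u₀ μ₀) : SigmaFinite μ₀ := by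
  refine ⟨⟨⟨fun n => Ico (-(n:ℝ)) n, fun _ => trivial, fun n => ?_, ?_⟩⟩⟩
  · rw [hμ₀ _ _ (by simp [neg_le_self_iff.2 (Nat.cast_nonneg (α := ℝ) n)])]
    exact ENNReal.ofReal_lt_top
  · ext x
    simp only [mem_iUnion, mem_Ico, mem_univ, iff_true]
    refine ⟨⌊|x|⌋₊ + 1, ?_, ?_⟩
    · have h := Nat.lt_floor_add_one |x|
      push_cast
      have := neg_abs_le x
      push_cast at h
      linarith
    · have h := Nat.lt_floor_add_one |x|
      have := le_abs_self x
      push_cast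
      push_cast at h
      linarith

theorem G_integrable (hpair : StandardPair u₀ v₀) (hF : IsCDF F) (hη : IsLSR01 v₀ η)
    (hν : IsLSR (fun x => v₀ (F x)) ν) (ha : CondA u₀ ν) :
    Integrable (fun α => u₀ (qh F α)) (η.restrict (Ioo 0 1)) := by
  constructor
  · exact (hpair.u_mono.measurable.comp hF.qh_measurable).aestronglyMeasurable
  · rw [hasFiniteIntegral_iff_norm]
    have heq : ∫⁻ α in Ioo 0 1, ENNReal.ofReal ‖u₀ (qh F α)‖ ∂η
        = ∫⁻ x, ENNReal.ofReal |u₀ x| ∂ν := by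
      rw [nu_eq_map hpair hF hη hν,
        lintegral_map (f := fun x => ENNReal.ofReal |u₀ x|)
          (ENNReal.measurable_ofReal.comp hpair.u_mono.measurable.abs)
          hF.qh_measurable]
      refine lintegral_congr fun α => ?_
      rw [Real.norm_eq_abs]
    rw [heq]
    exact ha

end Nu
section Tonelli

variable {u₀ v₀ F : ℝ → ℝ} {η μ₀ : Measure ℝ}

theorem A_eq (hpair : StandardPair u₀ v₀) (hF : IsCDF F) (hμ₀ : IsLSL u₀ μ₀)
    (hη : IsLSR01 v₀ η) (c : ℝ) :
    ∫⁻ x in Iio c, ENNReal.ofReal (v₀ (F x)) ∂μ₀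
      = ∫⁻ α in Ioo 0 1, ENNReal.ofReal (u₀ c - u₀ (qh F α)) ∂η := by
  haveI := hμ₀.sigmaFinite
  haveI := eta_restrict_finite hpair hη
  have hFm : Measurable F := hF.mono.measurable
  set η' := η.restrict (Ioo (0:ℝ) 1) with hη'
  have hfmeas : AEMeasurable (uncurry fun (x α : ℝ) => if α ≤ F x then (1:ENNReal) else 0)
      ((μ₀.restrict (Iio c)).prod η') := by
    have : Measurable fun p : ℝ × ℝ => if p.2 ≤ F p.1 then (1:ENNReal) else 0 :=
      Measurable.ite (measurableSet_le measurable_snd (hFm.comp measurable_fst))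
        measurable_const measurable_const
    exact this.aemeasurable
  have hswap := lintegral_lintegral_swap hfmeas
  have hL : ∫⁻ x in Iio c, ∫⁻ α, (if α ≤ F x then (1:ENNReal) else 0) ∂η' ∂μ₀
      = ∫⁻ x in Iio c, ENNReal.ofReal (v₀ (F x)) ∂μ₀ := by
    refine lintegral_congr fun x => ?_
    have : ∫⁻ α, (if α ≤ F x then (1:ENNReal) else 0) ∂η' = η' (Iic (F x)) := by
      rw [← lintegral_indicator_one measurableSet_Iic]
      refine lintegral_congr fun α => ?_
      simp [Set.indicator_apply]
    rw [this, hη', Measure.restrict_apply measurableSet_Iic,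
      eta_Iic_inter hpair hη (hF.nonneg x) (hF.le_one x)]
  have hR : ∫⁻ α, ∫⁻ x in Iio c, (if α ≤ F x then (1:ENNReal) else 0) ∂μ₀ ∂η'
      = ∫⁻ α in Ioo 0 1, ENNReal.ofReal (u₀ c - u₀ (qh F α)) ∂η := by
    rw [hη']
    refine setLIntegral_congr_fun measurableSet_Ioo ?_
    intro α hα
    beta_reduce
    have hs : MeasurableSet {x | α ≤ F x} := measurableSet_le measurable_const hFm
    have h1 : ∫⁻ x in Iio c, (if α ≤ F x then (1:ENNReal) else 0) ∂μ₀
        = μ₀ ({x | α ≤ F x} ∩ Iio c) := by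
      rw [← Measure.restrict_apply hs, ← lintegral_indicator_one hs]
      refine lintegral_congr fun x => ?_
      simp [Set.indicator_apply]
    rw [h1]
    have hIci : {x | α ≤ F x} = Ici (qf F α) := by
      ext x
      simp only [mem_setOf_eq, mem_Ici]
      exact (hF.qf_le_iff hα x).symm
    rw [hIci, Ici_inter_Iio, qh_eq hα]
    rcases le_or_gt (qf F α) c with h | h
    · exact hμ₀ _ _ h
    · rw [Ico_eq_empty (not_lt.2 h.le), measure_empty,
        Eq.comm, ENNReal.ofReal_eq_zero]
      exact sub_nonpos.2 (hpair.u_mono h.le)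
  rw [← hL, hswap, hR]

theorem lintegral_ofReal_sub_eq {m : Measure ℝ} [IsFiniteMeasure m] {G : ℝ → ℝ}
    (hGi : Integrable G m) (t : ℝ) :
    ∫⁻ α, ENNReal.ofReal (t - G α) ∂m = ENNReal.ofReal (∫ α, max (t - G α) 0 ∂m) := by
  have hint : Integrable (fun α => max (t - G α) 0) m := by
    have := ((integrable_const t).sub hGi).pos_part
    simpa using this
  rw [ofReal_integral_eq_lintegral_ofReal hint (ae_of_all _ fun a => le_max_right _ _)]
  refine lintegral_congr fun α => ?_
  rcases le_total (t - G α) 0 with h | h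
  · rw [max_eq_right h, ENNReal.ofReal_eq_zero.2 h, ENNReal.ofReal_zero]
  · rw [max_eq_left h]

end Tonelli
section Core

theorem integral_eq_setIntegral_Ioo (m : Measure ℝ) (hm : m (Ioo (0:ℝ) 1)ᶜ = 0)
    {f : ℝ → ℝ} (hfi : Integrable f m) :
    ∫ α, f α ∂m = ∫ α in Ioo (0:ℝ) 1, f α ∂m := by
  rw [← integral_add_compl measurableSet_Ioo hfi, setIntegral_measure_zero _ hm, add_zero]

theorem core_bwd (m : Measure ℝ) [IsFiniteMeasure m] (hm : m (Ioo (0:ℝ) 1)ᶜ = 0)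
    {G₁ G₂ : ℝ → ℝ} (hG₂mono : MonotoneOn G₂ (Ioo 0 1))
    (hG₂meas : Measurable G₂)
    (hG₁i : Integrable G₁ m) (hG₂i : Integrable G₂ m)
    (hB : ∀ p : ℝ, 0 ≤ p → p < 1 → ∫ α in Ioc 0 p, G₁ α ∂m ≤ ∫ α in Ioc 0 p, G₂ α ∂m)
    (t : ℝ) :
    ∫ α, max (t - G₂ α) 0 ∂m ≤ ∫ α, max (t - G₁ α) 0 ∂m := by
  have hmax1 : Integrable (fun α => max (t - G₁ α) 0) m := by
    simpa using ((integrable_const t).sub hG₁i).pos_part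
  have hmax2 : Integrable (fun α => max (t - G₂ α) 0) m := by
    simpa using ((integrable_const t).sub hG₂i).pos_part
  -- key inequality, valid for all p ∈ (0,1)
  have key : ∀ p : ℝ, 0 ≤ p → p < 1 →
      ∫ α in Ioc 0 p, (t - G₂ α) ∂m ≤ ∫ α, max (t - G₁ α) 0 ∂m := by
    intro p hp0 hp1
    have e2 : ∫ α in Ioc 0 p, (t - G₂ α) ∂m
        = (m (Ioc 0 p)).toReal * t - ∫ α in Ioc 0 p, G₂ α ∂m := by
      rw [integral_sub (integrable_const t).integrableOn hG₂i.integrableOn,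
        setIntegral_const, smul_eq_mul, measureReal_def]
    have e1 : ∫ α in Ioc 0 p, (t - G₁ α) ∂m
        = (m (Ioc 0 p)).toReal * t - ∫ α in Ioc 0 p, G₁ α ∂m := by
      rw [integral_sub (integrable_const t).integrableOn hG₁i.integrableOn,
        setIntegral_const, smul_eq_mul, measureReal_def]
    calc ∫ α in Ioc 0 p, (t - G₂ α) ∂m
        ≤ ∫ α in Ioc 0 p, (t - G₁ α) ∂m := by
          rw [e1, e2]; linarith [hB p hp0 hp1]
      _ ≤ ∫ α in Ioc 0 p, max (t - G₁ α) 0 ∂m :=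
          integral_mono ((integrable_const t).sub hG₁i).integrableOn hmax1.integrableOn
            (fun α => le_max_left _ _)
      _ ≤ ∫ α, max (t - G₁ α) 0 ∂m :=
          setIntegral_le_integral hmax1 (ae_of_all _ fun α => le_max_right _ _)
  set S : Set ℝ := Ioo (0:ℝ) 1 ∩ G₂ ⁻¹' (Iic t) with hSdef
  have hSsub : S ⊆ Ioo (0:ℝ) 1 := inter_subset_left
  have hSmeas : MeasurableSet S := measurableSet_Ioo.inter (hG₂meas measurableSet_Iic)
  have hLHS : ∫ α, max (t - G₂ α) 0 ∂m = ∫ α in S, (t - G₂ α) ∂m := by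
    rw [integral_eq_setIntegral_Ioo m hm hmax2]
    have hsplit : ∫ α in Ioo (0:ℝ) 1, max (t - G₂ α) 0 ∂m
        = ∫ α in S, max (t - G₂ α) 0 ∂m + ∫ α in Ioo (0:ℝ) 1 \ S, max (t - G₂ α) 0 ∂m := by
      rw [← setIntegral_union disjoint_sdiff_self_right (measurableSet_Ioo.diff hSmeas)
        hmax2.integrableOn hmax2.integrableOn, union_diff_cancel hSsub]
    rw [hsplit]
    have h1 : ∫ α in S, max (t - G₂ α) 0 ∂m = ∫ α in S, (t - G₂ α) ∂m :=
      setIntegral_congr_fun hSmeas (fun α hα => max_eq_left (sub_nonneg.2 hα.2))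
    have h2 : ∫ α in Ioo (0:ℝ) 1 \ S, max (t - G₂ α) 0 ∂m = 0 := by
      rw [setIntegral_congr_fun (measurableSet_Ioo.diff hSmeas)
        (g := fun _ => (0:ℝ)) ?_, integral_zero]
      intro α hα
      have : ¬ G₂ α ≤ t := by
        intro hc
        exact hα.2 ⟨hα.1, hc⟩
      exact max_eq_right (sub_nonpos.2 (le_of_not_ge this))
    rw [h1, h2, add_zero]
  rcases eq_empty_or_nonempty S with hS | hne
  · rw [hLHS, hS]
    simpa using integral_nonneg (fun α => le_max_right (t - G₁ α) 0)
  · have hbdd : BddAbove S := ⟨1, fun x hx => (hSsub hx).2.le⟩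
    set p := sSup S with hpdef
    have hp1 : p ≤ 1 := csSup_le hne (fun x hx => (hSsub hx).2.le)
    have hp0 : 0 < p := by
      obtain ⟨x, hx⟩ := hne
      exact lt_of_lt_of_le (hSsub hx).1 (le_csSup hbdd hx)
    by_cases hmem : p ∈ S
    · have hplt : p < 1 := (hSsub hmem).2
      have hSeq : S = Ioc 0 p := by
        ext x
        constructor
        · intro hx
          exact ⟨(hSsub hx).1, le_csSup hbdd hx⟩
        · intro hx
          have hxI : x ∈ Ioo (0:ℝ) 1 := ⟨hx.1, lt_of_le_of_lt hx.2 hplt⟩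
          exact ⟨hxI, le_trans (hG₂mono hxI (hSsub hmem) hx.2) hmem.2⟩
      rw [hLHS, hSeq]
      exact key p hp0.le hplt
    · have hSeq : S = Ioo 0 p := by
        ext x
        constructor
        · intro hx
          refine ⟨(hSsub hx).1, lt_of_le_of_ne (le_csSup hbdd hx) ?_⟩
          intro hc; exact hmem (hc ▸ hx)
        · intro hx
          obtain ⟨s, hsS, hxs⟩ := exists_lt_of_lt_csSup hne hx.2
          have hxI : x ∈ Ioo (0:ℝ) 1 := ⟨hx.1, lt_trans hxs (hSsub hsS).2⟩
          exact ⟨hxI, le_trans (hG₂mono hxI (hSsub hsS) hxs.le) hsS.2⟩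
      set q : ℕ → ℝ := fun n => p - p/(n+2) with hqdef
      have hq0 : ∀ n : ℕ, 0 < q n := by
        intro n
        have : p/((n:ℝ)+2) < p := div_lt_self hp0 (by linarith [Nat.cast_nonneg (α := ℝ) n])
        simp only [hqdef]
        linarith
      have hqp : ∀ n : ℕ, q n < p := fun n => sub_lt_self _ (by positivity)
      have hq1 : ∀ n : ℕ, q n < 1 := fun n => lt_of_lt_of_le (hqp n) hp1
      have hqt : Tendsto q atTop (𝓝 p) := by
        have h2 : Tendsto (fun n : ℕ => ((n:ℝ)+2)) atTop atTop :=
          tendsto_atTop_add_const_right atTop 2 tendsto_natCast_atTop_atTop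
        have h3 : Tendsto (fun n : ℕ => p/((n:ℝ)+2)) atTop (𝓝 0) := by
          have h := (tendsto_const_div_atTop_nhds_zero_nat p).comp (tendsto_add_atTop_nat 2)
          refine h.congr fun n => ?_
          simp only [Function.comp_apply]
          push_cast
          ring
        have := tendsto_const_nhds (x := p) (f := atTop (α := ℕ)) |>.sub h3
        simpa [hqdef] using this
      have hconv : Tendsto (fun n => ∫ α in Ioc 0 (q n), (t - G₂ α) ∂m) atTop
          (𝓝 (∫ α in Ioo 0 p, (t - G₂ α) ∂m)) := by
        simp_rw [← integral_indicator measurableSet_Ioc, ← integral_indicator measurableSet_Ioo]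
        apply tendsto_integral_of_dominated_convergence (bound := fun α => |t| + |G₂ α|)
        · intro n
          exact ((measurable_const.sub hG₂meas).indicator measurableSet_Ioc).aestronglyMeasurable
        · exact (integrable_const |t|).add hG₂i.abs
        · intro n
          filter_upwards with α
          refine le_trans (norm_indicator_le_norm_self _ _) ?_
          rw [Real.norm_eq_abs]
          exact le_trans (abs_sub _ _) (by simp)
        · filter_upwards with α
          by_cases hα : α ∈ Ioo (0:ℝ) p
          · rw [indicator_of_mem hα]
            apply tendsto_const_nhds.congr'
            filter_upwards [hqt.eventually (eventually_gt_nhds hα.2)] with n hn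
            rw [indicator_of_mem (show α ∈ Ioc 0 (q n) from ⟨hα.1, hn.le⟩)]
          · rw [indicator_of_notMem hα]
            apply tendsto_const_nhds.congr'
            filter_upwards with n
            rw [indicator_of_notMem]
            intro hc
            rcases lt_or_ge 0 α with h0 | h0
            · exact hα ⟨h0, lt_of_le_of_lt hc.2 (hqp n)⟩
            · exact absurd hc.1 (not_lt.2 h0)
      rw [hLHS, hSeq]
      exact le_of_tendsto hconv
        (Eventually.of_forall fun n => key (q n) (hq0 n).le (hq1 n))

end Core
section CoreFwd

theorem core_fwd (m : Measure ℝ) [IsFiniteMeasure m] (hm : m (Ioo (0:ℝ) 1)ᶜ = 0)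
    {G₁ G₂ : ℝ → ℝ} (hG₁mono : MonotoneOn G₁ (Ioo 0 1))
    (hG₁meas : Measurable G₁)
    (hG₁i : Integrable G₁ m) (hG₂i : Integrable G₂ m)
    (hK : ∀ c ∈ Ioo (0:ℝ) 1,
      ∫ α, max (G₁ c - G₂ α) 0 ∂m ≤ ∫ α, max (G₁ c - G₁ α) 0 ∂m)
    {p : ℝ} (hp0 : 0 ≤ p) (hp1 : p < 1) :
    ∫ α in Ioc 0 p, G₁ α ∂m ≤ ∫ α in Ioc 0 p, G₂ α ∂m := by
  rcases eq_or_lt_of_le hp0 with h0 | hp0'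
  · rw [← h0]
    simp
  set q : ℕ → ℝ := fun n => p + (1-p)/(n+2) with hqdef
  have hqp : ∀ n : ℕ, p < q n := by
    intro n
    have : (0:ℝ) < (1-p)/((n:ℝ)+2) := by
      apply div_pos (by linarith) (by positivity)
    simp only [hqdef]; linarith
  have hq1 : ∀ n : ℕ, q n < 1 := by
    intro n
    have : (1-p)/((n:ℝ)+2) < 1-p :=
      div_lt_self (by linarith) (by linarith [Nat.cast_nonneg (α := ℝ) n])
    simp only [hqdef]; linarith
  have hqIoo : ∀ n : ℕ, q n ∈ Ioo (0:ℝ) 1 := fun n => ⟨lt_trans hp0' (hqp n), hq1 n⟩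
  have hpIoo : p ∈ Ioo (0:ℝ) 1 := ⟨hp0', hp1⟩
  set t : ℕ → ℝ := fun n => G₁ (q n) with htdef
  have key : ∀ n : ℕ, ∫ α in Ioc 0 p, G₁ α ∂m ≤
      ∫ α in Ioc 0 p, G₂ α ∂m + ∫ α in Ioo p (q n), max (t n - G₁ α) 0 ∂m := by
    intro n
    have hmax1 : Integrable (fun α => max (t n - G₁ α) 0) m := by
      simpa using ((integrable_const (t n)).sub hG₁i).pos_part
    have hmax2 : Integrable (fun α => max (t n - G₂ α) 0) m := by
      simpa using ((integrable_const (t n)).sub hG₂i).pos_part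
    have ha : (m (Ioc 0 p)).toReal * t n - ∫ α in Ioc 0 p, G₂ α ∂m
        ≤ ∫ α, max (t n - G₂ α) 0 ∂m := by
      have e2 : ∫ α in Ioc 0 p, (t n - G₂ α) ∂m
          = (m (Ioc 0 p)).toReal * t n - ∫ α in Ioc 0 p, G₂ α ∂m := by
        rw [integral_sub (integrable_const (t n)).integrableOn hG₂i.integrableOn,
          setIntegral_const, smul_eq_mul, measureReal_def]
      rw [← e2]
      calc ∫ α in Ioc 0 p, (t n - G₂ α) ∂m
          ≤ ∫ α in Ioc 0 p, max (t n - G₂ α) 0 ∂m :=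
            integral_mono ((integrable_const (t n)).sub hG₂i).integrableOn
              hmax2.integrableOn (fun α => le_max_left _ _)
        _ ≤ ∫ α, max (t n - G₂ α) 0 ∂m :=
            setIntegral_le_integral hmax2 (ae_of_all _ fun α => le_max_right _ _)
    have hb : ∫ α, max (t n - G₁ α) 0 ∂m
        = ((m (Ioc 0 p)).toReal * t n - ∫ α in Ioc 0 p, G₁ α ∂m)
          + ∫ α in Ioo p (q n), max (t n - G₁ α) 0 ∂m := by
      rw [integral_eq_setIntegral_Ioo m hm hmax1]
      have hd1 : Disjoint (Ioc (0:ℝ) p) (Ioo p 1) := by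
        rw [Set.disjoint_left]
        rintro a ⟨_, h1⟩ ⟨h2, _⟩
        exact absurd h2 (not_lt.2 h1)
      rw [← Ioc_union_Ioo_eq_Ioo hp0 hp1,
        setIntegral_union hd1 measurableSet_Ioo
          hmax1.integrableOn hmax1.integrableOn]
      have h3 : ∫ α in Ioc 0 p, max (t n - G₁ α) 0 ∂m
          = (m (Ioc 0 p)).toReal * t n - ∫ α in Ioc 0 p, G₁ α ∂m := by
        rw [setIntegral_congr_fun measurableSet_Ioc (g := fun α => t n - G₁ α) ?_,
          integral_sub (integrable_const (t n)).integrableOn hG₁i.integrableOn,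
          setIntegral_const, smul_eq_mul, measureReal_def]
        intro α hα
        have hαI : α ∈ Ioo (0:ℝ) 1 := ⟨hα.1, lt_of_le_of_lt hα.2 hp1⟩
        exact max_eq_left (sub_nonneg.2
          (hG₁mono hαI (hqIoo n) (le_trans hα.2 (hqp n).le)))
      have h4 : ∫ α in Ioo p 1, max (t n - G₁ α) 0 ∂m
          = ∫ α in Ioo p (q n), max (t n - G₁ α) 0 ∂m := by
        have hd2 : Disjoint (Ioo p (q n)) (Ico (q n) 1) := by
          rw [Set.disjoint_left]
          rintro a ⟨_, h1⟩ ⟨h2, _⟩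
          exact absurd h2 (not_le.2 h1)
        rw [← Ioo_union_Ico_eq_Ioo (hqp n) (hq1 n).le,
          setIntegral_union hd2 measurableSet_Ico
            hmax1.integrableOn hmax1.integrableOn]
        have h5 : ∫ α in Ico (q n) 1, max (t n - G₁ α) 0 ∂m = 0 := by
          rw [setIntegral_congr_fun measurableSet_Ico (g := fun _ => (0:ℝ)) ?_, integral_zero]
          intro α hα
          have hαI : α ∈ Ioo (0:ℝ) 1 := ⟨lt_of_lt_of_le (hqIoo n).1 hα.1, hα.2⟩
          exact max_eq_right (sub_nonpos.2 (hG₁mono (hqIoo n) hαI hα.1))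
        rw [h5, add_zero]
      rw [h3, h4]
    have hchain := le_trans ha (le_trans (hK (q n) (hqIoo n)) hb.le)
    linarith
  have heps : Tendsto (fun n => ∫ α in Ioo p (q n), max (t n - G₁ α) 0 ∂m) atTop (𝓝 0) := by
    have hqt : Tendsto q atTop (𝓝 p) := by
      have h := (tendsto_const_div_atTop_nhds_zero_nat (1-p)).comp (tendsto_add_atTop_nat 2)
      have h2 : Tendsto (fun n : ℕ => (1-p)/((n:ℝ)+2)) atTop (𝓝 0) := by
        refine h.congr fun n => ?_
        simp only [Function.comp_apply]
        push_cast
        ring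
      have := tendsto_const_nhds (x := p) (f := atTop (α := ℕ)) |>.add h2
      simpa [hqdef] using this
    -- bound on t n
    have htbd : ∀ n, |t n| ≤ |G₁ p| + |t 0| := by
      intro n
      have hlow : G₁ p ≤ t n := hG₁mono hpIoo (hqIoo n) (hqp n).le
      have hhigh : t n ≤ t 0 := by
        apply hG₁mono (hqIoo n) (hqIoo 0)
        simp only [hqdef]
        have : (1-p)/((n:ℝ)+2) ≤ (1-p)/((0:ℕ)+2 : ℝ) := by
          apply div_le_div_of_nonneg_left (by linarith) (by norm_num)
            (by push_cast; linarith [Nat.cast_nonneg (α := ℝ) n])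
        push_cast at this ⊢
        linarith
      rw [abs_le]
      constructor
      · have := neg_abs_le (G₁ p); linarith [le_abs_self (t 0), abs_nonneg (t 0)]
      · have := le_abs_self (t 0); linarith [abs_nonneg (G₁ p), neg_abs_le (G₁ p)]
    have hzero : Tendsto (fun n => ∫ α, (Ioo p (q n)).indicator
        (fun α => max (t n - G₁ α) 0) α ∂m) atTop (𝓝 (∫ α, (0:ℝ) ∂m)) := by
      apply tendsto_integral_of_dominated_convergence
        (bound := fun α => (|G₁ p| + |t 0|) + |G₁ α|)
      · intro n
        exact ((measurable_const.sub hG₁meas).max measurable_const).indicator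
          measurableSet_Ioo |>.aestronglyMeasurable
      · exact (integrable_const _).add hG₁i.abs
      · intro n
        filter_upwards with α
        refine le_trans (norm_indicator_le_norm_self _ _) ?_
        rw [Real.norm_eq_abs, abs_of_nonneg (le_max_right _ _)]
        rcases le_total (t n - G₁ α) 0 with h | h
        · rw [max_eq_right h]
          positivity
        · rw [max_eq_left h]
          have h1 := htbd n
          have h2 := neg_abs_le (G₁ α)
          have h3 := le_abs_self (t n)
          have h4 := abs_le.1 h1
          linarith
      · filter_upwards with α
        by_cases hα : p < α
        · apply tendsto_const_nhds.congr'
          filter_upwards [hqt.eventually (eventually_lt_nhds hα)] with n hn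
          rw [indicator_of_notMem]
          intro hc
          exact absurd hc.2 (not_lt.2 hn.le)
        · apply tendsto_const_nhds.congr'
          filter_upwards with n
          rw [indicator_of_notMem]
          intro hc
          exact hα hc.1
    simp only [integral_zero] at hzero
    refine hzero.congr fun n => ?_
    rw [integral_indicator measurableSet_Ioo]
  have hfin : Tendsto (fun n => ∫ α in Ioc 0 p, G₂ α ∂m
      + ∫ α in Ioo p (q n), max (t n - G₁ α) 0 ∂m) atTop (𝓝 (∫ α in Ioc 0 p, G₂ α ∂m)) := by
    have := tendsto_const_nhds (x := ∫ α in Ioc 0 p, G₂ α ∂m) (f := atTop (α := ℕ)) |>.add heps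
    simpa using this
  exact ge_of_tendsto hfin (Eventually.of_forall key)

end CoreFwd

/-- **Lemma 1.**  Let `(u₀,v₀)` be a standard pair and `F₁, F₂` cdf's
satisfying condition (a).  Then
(i) `∫_{-∞}^{c} v₀(F₁) du₀ ≥ ∫_{-∞}^{c} v₀(F₂) du₀` for all `c ∈ ℝ`
is equivalent to
(ii) `∫_{0}^{p} u₀(F₁⁻¹) dv₀ ≤ ∫_{0}^{p} u₀(F₂⁻¹) dv₀` for all `p ∈ [0,1)`.
Here `μ₀` is the Stieltjes measure of `u₀` (`[a,b)` convention), `η` the Stieltjes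
measure of `v₀` on `[0,1]` (`(a,b]` convention), and `ν₁, ν₂` those of `v₀ ∘ F₁`,
`v₀ ∘ F₂` (`(a,b]` convention, entering condition (a)). -/
theorem lemma1_duality
    (u₀ v₀ F₁ F₂ : ℝ → ℝ) (hpair : StandardPair u₀ v₀)
    (hF₁ : IsCDF F₁) (hF₂ : IsCDF F₂)
    (μ₀ : Measure ℝ) (hμ₀ : IsLSL u₀ μ₀)
    (η : Measure ℝ) (hη : IsLSR01 v₀ η)
    (ν₁ ν₂ : Measure ℝ)
    (hν₁ : IsLSR (fun x => v₀ (F₁ x)) ν₁) (hν₂ : IsLSR (fun x => v₀ (F₂ x)) ν₂)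
    (ha₁ : CondA u₀ ν₁) (ha₂ : CondA u₀ ν₂) :
    (∀ c : ℝ,
      ∫⁻ x in Iio c, ENNReal.ofReal (v₀ (F₂ x)) ∂μ₀ ≤
        ∫⁻ x in Iio c, ENNReal.ofReal (v₀ (F₁ x)) ∂μ₀) ↔
    (∀ p : ℝ, 0 ≤ p → p < 1 →
      ∫ α in Ioc 0 p, u₀ (qf F₁ α) ∂η ≤ ∫ α in Ioc 0 p, u₀ (qf F₂ α) ∂η) := by
  haveI : IsFiniteMeasure (η.restrict (Ioo 0 1)) := eta_restrict_finite hpair hη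
  have hmc : (η.restrict (Ioo (0:ℝ) 1)) (Ioo (0:ℝ) 1)ᶜ = 0 := by
    rw [Measure.restrict_apply measurableSet_Ioo.compl]
    simp
  have hG₁i : Integrable (fun α => u₀ (qh F₁ α)) (η.restrict (Ioo 0 1)) :=
    G_integrable hpair hF₁ hη hν₁ ha₁
  have hG₂i : Integrable (fun α => u₀ (qh F₂ α)) (η.restrict (Ioo 0 1)) :=
    G_integrable hpair hF₂ hη hν₂ ha₂
  have hG₁meas : Measurable (fun α => u₀ (qh F₁ α)) :=
    hpair.u_mono.measurable.comp hF₁.qh_measurable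
  have hG₂meas : Measurable (fun α => u₀ (qh F₂ α)) :=
    hpair.u_mono.measurable.comp hF₂.qh_measurable
  have hG₁mono : MonotoneOn (fun α => u₀ (qh F₁ α)) (Ioo 0 1) :=
    fun a ha b hb hab => hpair.u_mono (hF₁.qh_monotoneOn ha hb hab)
  have hG₂mono : MonotoneOn (fun α => u₀ (qh F₂ α)) (Ioo 0 1) :=
    fun a ha b hb hab => hpair.u_mono (hF₂.qh_monotoneOn ha hb hab)
  have hA : ∀ (F : ℝ → ℝ), IsCDF F →
      ∀ (hint : Integrable (fun α => u₀ (qh F α)) (η.restrict (Ioo 0 1))), ∀ c : ℝ,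
      ∫⁻ x in Iio c, ENNReal.ofReal (v₀ (F x)) ∂μ₀
        = ENNReal.ofReal (∫ α, max (u₀ c - u₀ (qh F α)) 0 ∂(η.restrict (Ioo 0 1))) := by
    intro F hF hint c
    rw [A_eq hpair hF hμ₀ hη c]
    exact lintegral_ofReal_sub_eq hint (u₀ c)
  have hBeq : ∀ (F : ℝ → ℝ) (p : ℝ), 0 ≤ p → p < 1 →
      ∫ α in Ioc 0 p, u₀ (qf F α) ∂η
        = ∫ α in Ioc 0 p, u₀ (qh F α) ∂(η.restrict (Ioo 0 1)) := by
    intro F p hp0 hp1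
    rw [Measure.restrict_restrict measurableSet_Ioc]
    have hsub : Ioc (0:ℝ) p ⊆ Ioo (0:ℝ) 1 :=
      fun α hα => ⟨hα.1, lt_of_le_of_lt hα.2 hp1⟩
    rw [inter_eq_self_of_subset_left hsub]
    refine setIntegral_congr_fun measurableSet_Ioc fun α hα => ?_
    rw [qh_eq (hsub hα)]
  constructor
  · intro hi p hp0 hp1
    rw [hBeq F₁ p hp0 hp1, hBeq F₂ p hp0 hp1]
    refine core_fwd (η.restrict (Ioo 0 1)) hmc hG₁mono hG₁meas hG₁i hG₂i ?_ hp0 hp1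
    intro c hc
    have h := hi (qh F₁ c)
    rw [hA F₁ hF₁ hG₁i (qh F₁ c), hA F₂ hF₂ hG₂i (qh F₁ c)] at h
    exact (ENNReal.ofReal_le_ofReal_iff
      (integral_nonneg fun α => le_max_right _ _)).1 h
  · intro hii c
    rw [hA F₁ hF₁ hG₁i c, hA F₂ hF₂ hG₂i c]
    apply ENNReal.ofReal_le_ofReal
    refine core_bwd (η.restrict (Ioo 0 1)) hmc hG₂mono hG₂meas hG₁i hG₂i ?_ (u₀ c)
    intro p hp0 hp1
    rw [← hBeq F₁ p hp0 hp1, ← hBeq F₂ p hp0 hp1]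
    exact hii p hp0 hp1

end
end

section
/- Let (u₀,v₀) be a standard pair, U⁰ the class of non-decreasing u₀-concave functions, and let F₁, F₂ be cdf's satisfying conditions (a) and (b). Then F₁ ≺^{(u₀,v₀)} F₂ holds if and only if ∫_{-∞}^{∞} u(x) dv₀(F₁(x)) ≤ ∫_{-∞}^{∞} u(x) dv₀(F₂(x)) for all u ∈ U⁰. -/
open MeasureTheory Set Filter Topology Function

noncomputable section

variable {u₀ v₀ F : ℝ → ℝ}

lemma cdf_mem_Icc (hF : IsCDF F) (x : ℝ) : F x ∈ Icc (0:ℝ) 1 :=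
  ⟨le_of_tendsto hF.tendsto_atBot (eventually_atBot.2 ⟨x, fun y hy => hF.mono hy⟩),
   ge_of_tendsto hF.tendsto_atTop (eventually_atTop.2 ⟨x, fun y hy => hF.mono hy⟩)⟩

lemma vF_mono (hp : StandardPair u₀ v₀) (hF : IsCDF F) : Monotone (fun x => v₀ (F x)) :=
  fun x y hxy => hp.v_mono (cdf_mem_Icc hF x) (cdf_mem_Icc hF y) (hF.mono hxy)

lemma vF_mem (hp : StandardPair u₀ v₀) (hF : IsCDF F) (x : ℝ) : v₀ (F x) ∈ Icc (0:ℝ) 1 :=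
  hp.v_mem _ (cdf_mem_Icc hF x)

lemma v_one' (hp : StandardPair u₀ v₀) : v₀ 1 = 1 := by
  refine le_antisymm (hp.v_mem 1 (by simp)).2 ?_
  refine le_of_tendsto hp.v_one ?_
  filter_upwards [Ioo_mem_nhdsLT_of_mem (by norm_num : (1:ℝ) ∈ Ioc (1/2 : ℝ) 1)] with α hα
  exact hp.v_mono ⟨by linarith [hα.1], hα.2.le⟩ (by simp) hα.2.le

lemma vF_tendsto_atBot (hp : StandardPair u₀ v₀) (hF : IsCDF F) :
    Tendsto (fun x => v₀ (F x)) atBot (𝓝 0) := by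
  rw [tendsto_order]
  constructor
  · intro b hb
    exact Eventually.of_forall fun x => lt_of_lt_of_le hb (vF_mem hp hF x).1
  · intro ε hε
    have h0 : (0:ℝ) ∈ Ico (0:ℝ) 1 := ⟨le_refl 0, zero_lt_one⟩
    have := (hp.v_right_cont 0 h0).eventually (eventually_lt_nhds (by rw [hp.v_zero]; exact hε))
    rw [eventually_nhdsWithin_iff] at this
    rcases Metric.eventually_nhds_iff.1 this with ⟨δ, hδ, hball⟩
    filter_upwards [hF.tendsto_atBot.eventually (eventually_lt_nhds hδ)] with x hx
    have hFx := cdf_mem_Icc hF x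
    rcases eq_or_lt_of_le hFx.1 with h | h
    · rw [← h, hp.v_zero]; exact hε
    · exact hball (by rw [Real.dist_eq, sub_zero, abs_of_pos h]; exact hx) h

lemma vF_tendsto_atTop (hp : StandardPair u₀ v₀) (hF : IsCDF F) :
    Tendsto (fun x => v₀ (F x)) atTop (𝓝 1) := by
  rw [tendsto_order]
  constructor
  · intro ε hε
    have : ∀ᶠ α in 𝓝[<] (1:ℝ), ε < v₀ α := hp.v_one.eventually (eventually_gt_nhds hε)
    rw [eventually_nhdsWithin_iff] at this
    rcases Metric.eventually_nhds_iff.1 this with ⟨δ, hδ, hball⟩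
    have hδ1 : max (1 - δ) 0 < 1 := by
      rcases le_or_gt δ 1 with h | h
      · rw [max_eq_left (by linarith)]; linarith
      · rw [max_eq_right (by linarith)]; norm_num
    filter_upwards [hF.tendsto_atTop.eventually (eventually_gt_nhds hδ1)] with x hx
    have hFx := cdf_mem_Icc hF x
    rcases eq_or_lt_of_le hFx.2 with h | h
    · rw [h, v_one' hp]; exact hε
    · refine hball ?_ h
      rw [Real.dist_eq, abs_of_nonpos (by linarith)]
      have := lt_of_le_of_lt (le_max_left (1-δ) 0) hx
      linarith
  · intro b hb
    exact Eventually.of_forall fun x => lt_of_le_of_lt (vF_mem hp hF x).2 hb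


-- generic: measure of Iic from Ioc values plus tendsto of g at -infty
lemma lsr_Iic {g : ℝ → ℝ} (hν : IsLSR g ν) (h0 : Tendsto g atBot (𝓝 0)) (b : ℝ) :
    ν (Iic b) = ENNReal.ofReal (g b) := by
  have hun : ⋃ n : ℕ, Ioc (b - n) b = Iic b := by
    ext x; simp only [mem_iUnion, mem_Ioc, mem_Iic]
    constructor
    · rintro ⟨n, _, h⟩; exact h
    · intro h
      rcases exists_nat_gt (b - x) with ⟨n, hn⟩
      exact ⟨n, by linarith, h⟩
  have hmono : Monotone (fun n : ℕ => Ioc (b - n) b) := by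
    intro m n hmn
    exact Ioc_subset_Ioc (by have := sub_le_sub_left (Nat.cast_le (α := ℝ) |>.2 hmn) b; linarith) le_rfl
  have h1 := tendsto_measure_iUnion_atTop (μ := ν) hmono
  rw [hun] at h1
  have h2 : Tendsto (fun n : ℕ => ν (Ioc (b - n) b)) atTop (𝓝 (ENNReal.ofReal (g b))) := by
    have heq : ∀ n : ℕ, ν (Ioc (b - n) b) = ENNReal.ofReal (g b - g (b - n)) :=
      fun n => hν _ _ (by simp)
    simp_rw [heq]
    have hbn : Tendsto (fun n : ℕ => b - (n : ℝ)) atTop atBot := by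
      have h1 : Tendsto (fun n : ℕ => -(n : ℝ)) atTop atBot :=
        tendsto_neg_atTop_atBot.comp tendsto_natCast_atTop_atTop
      have h2 := tendsto_atBot_add_const_right atTop b h1
      simpa [sub_eq_neg_add] using h2
    have : Tendsto (fun n : ℕ => g b - g (b - n)) atTop (𝓝 (g b - 0)) :=
      tendsto_const_nhds.sub (h0.comp hbn)
    rw [sub_zero] at this
    exact (ENNReal.continuous_ofReal.tendsto _).comp this
  exact tendsto_nhds_unique h1 h2

lemma lsr_Ioi {g : ℝ → ℝ} (hν : IsLSR g ν) (h1 : Tendsto g atTop (𝓝 1)) (a : ℝ) :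
    ν (Ioi a) = ENNReal.ofReal (1 - g a) := by
  have hun : ⋃ n : ℕ, Ioc a (a + n) = Ioi a := by
    ext x; simp only [mem_iUnion, mem_Ioc, mem_Ioi]
    constructor
    · rintro ⟨n, h, _⟩; exact h
    · intro h
      rcases exists_nat_gt (x - a) with ⟨n, hn⟩
      exact ⟨n, h, by linarith⟩
  have hmono : Monotone (fun n : ℕ => Ioc a (a + n)) := by
    intro m n hmn
    exact Ioc_subset_Ioc le_rfl (by have := Nat.cast_le (α := ℝ) |>.2 hmn; linarith)
  have hmeas := tendsto_measure_iUnion_atTop (μ := ν) hmono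
  rw [hun] at hmeas
  have h2 : Tendsto (fun n : ℕ => ν (Ioc a (a + n))) atTop (𝓝 (ENNReal.ofReal (1 - g a))) := by
    have heq : ∀ n : ℕ, ν (Ioc a (a + n)) = ENNReal.ofReal (g (a + n) - g a) :=
      fun n => hν _ _ (by have : (0:ℝ) ≤ n := n.cast_nonneg; linarith)
    simp_rw [heq]
    have han : Tendsto (fun n : ℕ => a + (n : ℝ)) atTop atTop :=
      tendsto_atTop_add_const_left atTop a tendsto_natCast_atTop_atTop
    have : Tendsto (fun n : ℕ => g (a + n) - g a) atTop (𝓝 (1 - g a)) :=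
      (h1.comp han).sub tendsto_const_nhds
    exact (ENNReal.continuous_ofReal.tendsto _).comp this
  exact tendsto_nhds_unique hmeas h2

lemma lsr_univ {g : ℝ → ℝ} (hν : IsLSR g ν) (h0 : Tendsto g atBot (𝓝 0))
    (h1 : Tendsto g atTop (𝓝 1)) (hg0 : 0 ≤ g 0) (hg1 : g 0 ≤ 1) : ν univ = 1 := by
  have : (univ : Set ℝ) = Iic 0 ∪ Ioi 0 := by simp [Iic_union_Ioi]
  rw [this, measure_union (Iic_disjoint_Ioi le_rfl) measurableSet_Ioi,
    lsr_Iic hν h0 0, lsr_Ioi hν h1 0, ← ENNReal.ofReal_add hg0 (by linarith)]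
  norm_num

lemma sigmaFinite_of_isLSL {g : ℝ → ℝ} {μ : Measure ℝ} (h : IsLSL g μ) : SigmaFinite μ := by
  refine ⟨⟨⟨fun n => Ico (-(n:ℝ)) n, fun _ => trivial, fun n => ?_, ?_⟩⟩⟩
  · rw [h _ _ (by have : (0:ℝ) ≤ n := n.cast_nonneg; linarith)]
    exact ENNReal.ofReal_lt_top
  · apply iUnion_eq_univ_iff.2
    intro x
    rcases exists_nat_gt |x| with ⟨n, hn⟩
    have := abs_lt.1 hn
    exact ⟨n, this.1.le, this.2⟩

-- swap lemmas
lemma swap_plus {μ : Measure ℝ} [SigmaFinite μ] {ν : Measure ℝ} [IsFiniteMeasure ν]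
    {h : ℝ → ENNReal} (hh : Measurable h) :
    ∫⁻ x, (∫⁻ s in Ico 0 x, h s ∂μ) ∂ν = ∫⁻ s in Ici 0, h s * ν (Ioi s) ∂μ := by
  set f : ℝ → ℝ → ENNReal := fun x s => if 0 ≤ s ∧ s < x then h s else 0 with hf
  have hmeas : AEMeasurable (Function.uncurry f) (ν.prod μ) := by
    apply Measurable.aemeasurable
    apply Measurable.ite _ (hh.comp measurable_snd) measurable_const
    exact MeasurableSet.inter (measurable_snd measurableSet_Ici)
      (measurableSet_lt measurable_snd measurable_fst)
  have h1 : ∀ x, ∫⁻ s, f x s ∂μ = ∫⁻ s in Ico 0 x, h s ∂μ := by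
    intro x
    rw [← lintegral_indicator measurableSet_Ico]
    congr 1; ext s
    simp only [hf, indicator, mem_Ico]
  have h2 : ∀ s, ∫⁻ x, f x s ∂ν = (Ici (0:ℝ)).indicator (fun s => h s * ν (Ioi s)) s := by
    intro s
    by_cases hs : 0 ≤ s
    · have : (fun x => f x s) = (Ioi s).indicator (fun _ => h s) := by
        ext x; simp only [hf, indicator, mem_Ioi]
        by_cases hx : s < x <;> simp [hx, hs]
      rw [this, lintegral_indicator measurableSet_Ioi, setLIntegral_const]
      simp [indicator, hs]
    · have : (fun x => f x s) = fun _ => 0 := by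
        ext x; simp [hf, hs]
      rw [this, lintegral_const, zero_mul]
      simp [indicator, hs]
  calc ∫⁻ x, (∫⁻ s in Ico 0 x, h s ∂μ) ∂ν = ∫⁻ x, ∫⁻ s, f x s ∂μ ∂ν := by simp_rw [h1]
    _ = ∫⁻ s, ∫⁻ x, f x s ∂ν ∂μ := lintegral_lintegral_swap hmeas
    _ = ∫⁻ s, (Ici (0:ℝ)).indicator (fun s => h s * ν (Ioi s)) s ∂μ := by simp_rw [h2]
    _ = ∫⁻ s in Ici 0, h s * ν (Ioi s) ∂μ := lintegral_indicator measurableSet_Ici _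

lemma swap_minus {μ : Measure ℝ} [SigmaFinite μ] {ν : Measure ℝ} [IsFiniteMeasure ν]
    {h : ℝ → ENNReal} (hh : Measurable h) :
    ∫⁻ x, (∫⁻ s in Ico x 0, h s ∂μ) ∂ν = ∫⁻ s in Iio 0, h s * ν (Iic s) ∂μ := by
  set f : ℝ → ℝ → ENNReal := fun x s => if x ≤ s ∧ s < 0 then h s else 0 with hf
  have hmeas : AEMeasurable (Function.uncurry f) (ν.prod μ) := by
    apply Measurable.aemeasurable
    apply Measurable.ite _ (hh.comp measurable_snd) measurable_const
    exact MeasurableSet.inter (measurableSet_le measurable_fst measurable_snd)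
      (measurable_snd measurableSet_Iio)
  have h1 : ∀ x, ∫⁻ s, f x s ∂μ = ∫⁻ s in Ico x 0, h s ∂μ := by
    intro x
    rw [← lintegral_indicator measurableSet_Ico]
    congr 1; ext s
    simp only [hf, indicator, mem_Ico]
  have h2 : ∀ s, ∫⁻ x, f x s ∂ν = (Iio (0:ℝ)).indicator (fun s => h s * ν (Iic s)) s := by
    intro s
    by_cases hs : s < 0
    · have : (fun x => f x s) = (Iic s).indicator (fun _ => h s) := by
        ext x; simp only [hf, indicator, mem_Iic]
        by_cases hx : x ≤ s <;> simp [hx, hs]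
      rw [this, lintegral_indicator measurableSet_Iic, setLIntegral_const]
      simp [indicator, hs]
    · have : (fun x => f x s) = fun _ => 0 := by
        ext x; simp [hf, hs]
      rw [this, lintegral_const, zero_mul]
      simp [indicator, hs]
  calc ∫⁻ x, (∫⁻ s in Ico x 0, h s ∂μ) ∂ν = ∫⁻ x, ∫⁻ s, f x s ∂μ ∂ν := by simp_rw [h1]
    _ = ∫⁻ s, ∫⁻ x, f x s ∂ν ∂μ := lintegral_lintegral_swap hmeas
    _ = ∫⁻ s, (Iio (0:ℝ)).indicator (fun s => h s * ν (Iic s)) s ∂μ := by simp_rw [h2]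
    _ = ∫⁻ s in Iio 0, h s * ν (Iic s) ∂μ := lintegral_indicator measurableSet_Iio _


variable {k u : ℝ → ℝ} {C : ℝ}

/-- Finiteness of P and Q from condition (a). -/
lemma key_fin (hp : StandardPair u₀ v₀) (hF : IsCDF F) {μ₀ ν : Measure ℝ}
    [SigmaFinite μ₀] [IsFiniteMeasure ν]
    (hν : IsLSR (fun x => v₀ (F x)) ν) (hμ₀ : IsLSL u₀ μ₀) (ha : CondA u₀ ν)
    (hk0 : ∀ x, 0 ≤ k x) (hkC : ∀ x, k x ≤ C) :
    (∫⁻ s in Iio 0, ENNReal.ofReal (k s * v₀ (F s)) ∂μ₀ < ⊤) ∧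
    (∫⁻ s in Ici 0, ENNReal.ofReal (k s * (1 - v₀ (F s))) ∂μ₀ < ⊤) := by
  have hC : 0 ≤ C := le_trans (hk0 0) (hkC 0)
  have hbound : ∀ a b : ℝ,
      μ₀ (Ico a b) ≤ ENNReal.ofReal |u₀ 0| + ENNReal.ofReal |u₀ b| + ENNReal.ofReal |u₀ a| := by
    intro a b
    rcases le_or_gt a b with h | h
    · rw [hμ₀ a b h]
      calc ENNReal.ofReal (u₀ b - u₀ a) ≤ ENNReal.ofReal (|u₀ b| + |u₀ a|) := by
            apply ENNReal.ofReal_le_ofReal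
            have h1 := le_abs_self (u₀ b); have h2 := neg_abs_le (u₀ a); linarith
        _ ≤ ENNReal.ofReal |u₀ b| + ENNReal.ofReal |u₀ a| := ENNReal.ofReal_add_le
        _ ≤ _ := by
            rw [add_assoc]
            exact le_add_self
    · rw [Ico_eq_empty (not_lt.2 h.le), measure_empty]; exact zero_le
  have hIfin : ∫⁻ x, (ENNReal.ofReal |u₀ 0| + ENNReal.ofReal |u₀ x| + ENNReal.ofReal |u₀ 0|) ∂ν < ⊤ := by
    have h1 : ∫⁻ x, (ENNReal.ofReal |u₀ 0| + ENNReal.ofReal |u₀ x| + ENNReal.ofReal |u₀ 0|) ∂ν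
        = (ENNReal.ofReal |u₀ 0| + ENNReal.ofReal |u₀ 0|) * ν univ + ∫⁻ x, ENNReal.ofReal |u₀ x| ∂ν := by
      have : ∀ x : ℝ, ENNReal.ofReal |u₀ 0| + ENNReal.ofReal |u₀ x| + ENNReal.ofReal |u₀ 0|
          = (ENNReal.ofReal |u₀ 0| + ENNReal.ofReal |u₀ 0|) + ENNReal.ofReal |u₀ x| := by
        intro x; ring
      rw [lintegral_congr this, lintegral_add_left measurable_const, lintegral_const]
    rw [h1]
    exact ENNReal.add_lt_top.2 ⟨ENNReal.mul_lt_top (by finiteness) (measure_lt_top _ _), ha⟩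
  constructor
  · -- P: over Iio 0
    have hIic : ∀ s : ℝ, ENNReal.ofReal (v₀ (F s)) = ν (Iic s) :=
      fun s => (lsr_Iic hν (vF_tendsto_atBot hp hF) s).symm
    have step1 : ∫⁻ s in Iio 0, ENNReal.ofReal (k s * v₀ (F s)) ∂μ₀
        ≤ ENNReal.ofReal C * ∫⁻ s in Iio 0, ν (Iic s) ∂μ₀ := by
      rw [← lintegral_const_mul' _ _ ENNReal.ofReal_ne_top]
      apply lintegral_mono
      intro s
      show ENNReal.ofReal (k s * v₀ (F s)) ≤ ENNReal.ofReal C * ν (Iic s)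
      rw [← hIic s, ← ENNReal.ofReal_mul hC]
      exact ENNReal.ofReal_le_ofReal
        (mul_le_mul_of_nonneg_right (hkC s) (vF_mem hp hF s).1)
    have step2 : ∫⁻ s in Iio 0, ν (Iic s) ∂μ₀ = ∫⁻ x, μ₀ (Ico x 0) ∂ν := by
      have := swap_minus (μ := μ₀) (ν := ν) (h := fun _ => 1) measurable_const
      simp only [setLIntegral_one, one_mul] at this
      exact this.symm
    have step3 : ∫⁻ x, μ₀ (Ico x 0) ∂ν < ⊤ := by
      refine lt_of_le_of_lt (lintegral_mono fun x => ?_) hIfin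
      calc μ₀ (Ico x 0) ≤ ENNReal.ofReal |u₀ 0| + ENNReal.ofReal |u₀ 0| + ENNReal.ofReal |u₀ x| := hbound x 0
        _ = ENNReal.ofReal |u₀ 0| + ENNReal.ofReal |u₀ x| + ENNReal.ofReal |u₀ 0| := by ring
    exact lt_of_le_of_lt step1 (ENNReal.mul_lt_top (by finiteness) (step2 ▸ step3))
  · -- Q: over Ici 0
    have hIoi : ∀ s : ℝ, ENNReal.ofReal (1 - v₀ (F s)) = ν (Ioi s) :=
      fun s => (lsr_Ioi hν (vF_tendsto_atTop hp hF) s).symm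
    have step1 : ∫⁻ s in Ici 0, ENNReal.ofReal (k s * (1 - v₀ (F s))) ∂μ₀
        ≤ ENNReal.ofReal C * ∫⁻ s in Ici 0, ν (Ioi s) ∂μ₀ := by
      rw [← lintegral_const_mul' _ _ ENNReal.ofReal_ne_top]
      apply lintegral_mono
      intro s
      show ENNReal.ofReal (k s * (1 - v₀ (F s))) ≤ ENNReal.ofReal C * ν (Ioi s)
      rw [← hIoi s, ← ENNReal.ofReal_mul hC]
      exact ENNReal.ofReal_le_ofReal
        (mul_le_mul_of_nonneg_right (hkC s) (by linarith [(vF_mem hp hF s).2]))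
    have step2 : ∫⁻ s in Ici 0, ν (Ioi s) ∂μ₀ = ∫⁻ x, μ₀ (Ico 0 x) ∂ν := by
      have := swap_plus (μ := μ₀) (ν := ν) (h := fun _ => 1) measurable_const
      simp only [setLIntegral_one, one_mul] at this
      exact this.symm
    have step3 : ∫⁻ x, μ₀ (Ico 0 x) ∂ν < ⊤ := by
      refine lt_of_le_of_lt (lintegral_mono fun x => ?_) hIfin
      have := hbound 0 x
      calc μ₀ (Ico 0 x) ≤ ENNReal.ofReal |u₀ 0| + ENNReal.ofReal |u₀ x| + ENNReal.ofReal |u₀ 0| := this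
        _ = _ := rfl
    exact lt_of_le_of_lt step1 (ENNReal.mul_lt_top (by finiteness) (step2 ▸ step3))

lemma lint_Ico_fin {μ₀ : Measure ℝ} (hμ₀ : IsLSL u₀ μ₀) (hk0 : ∀ x, 0 ≤ k x)
    (hkC : ∀ x, k x ≤ C) (a b : ℝ) :
    ∫⁻ s in Ico a b, ENNReal.ofReal (k s) ∂μ₀ ≠ ⊤ := by
  have hμfin : μ₀ (Ico a b) < ⊤ := by
    rcases le_or_gt a b with h | h
    · rw [hμ₀ a b h]; exact ENNReal.ofReal_lt_top
    · rw [Ico_eq_empty (not_lt.2 h.le), measure_empty]; exact ENNReal.zero_lt_top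
  refine ne_of_lt (lt_of_le_of_lt ?_ (ENNReal.mul_lt_top (ENNReal.ofReal_lt_top (r := C)) hμfin))
  calc ∫⁻ s in Ico a b, ENNReal.ofReal (k s) ∂μ₀
      ≤ ∫⁻ _ in Ico a b, ENNReal.ofReal C ∂μ₀ :=
        lintegral_mono fun s => ENNReal.ofReal_le_ofReal (hkC s)
    _ = ENNReal.ofReal C * μ₀ (Ico a b) := setLIntegral_const _ _

/-- The key representation: `∫ u dν = u 0 + Q.toReal - P.toReal`. -/
lemma key_repr (hp : StandardPair u₀ v₀) (hF : IsCDF F) {μ₀ ν : Measure ℝ}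
    [SigmaFinite μ₀] [IsFiniteMeasure ν]
    (hν : IsLSR (fun x => v₀ (F x)) ν) (hμ₀ : IsLSL u₀ μ₀)
    (hk : Antitone k) (hk0 : ∀ x, 0 ≤ k x) (hkC : ∀ x, k x ≤ C)
    (hPfin : ∫⁻ s in Iio 0, ENNReal.ofReal (k s * v₀ (F s)) ∂μ₀ ≠ ⊤)
    (hQfin : ∫⁻ s in Ici 0, ENNReal.ofReal (k s * (1 - v₀ (F s))) ∂μ₀ ≠ ⊤)
    (hu : HasDensity u k μ₀) :
    ∫ x, u x ∂ν = u 0 + (∫⁻ s in Ici 0, ENNReal.ofReal (k s * (1 - v₀ (F s))) ∂μ₀).toReal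
      - (∫⁻ s in Iio 0, ENNReal.ofReal (k s * v₀ (F s)) ∂μ₀).toReal := by
  have hνuniv : ν univ = 1 :=
    lsr_univ hν (vF_tendsto_atBot hp hF) (vF_tendsto_atTop hp hF)
      (vF_mem hp hF 0).1 (vF_mem hp hF 0).2
  set KK : ℝ → ENNReal := fun s => ENNReal.ofReal (k s) with hKK
  have hKKm : Measurable KK := hk.measurable.ennreal_ofReal
  have hfin : ∀ a b : ℝ, ∫⁻ s in Ico a b, KK s ∂μ₀ ≠ ⊤ :=
    fun a b => lint_Ico_fin hμ₀ hk0 hkC a b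
  set gp : ℝ → ℝ := fun x => (∫⁻ s in Ico 0 x, KK s ∂μ₀).toReal with hgp
  set gm : ℝ → ℝ := fun x => (∫⁻ s in Ico x 0, KK s ∂μ₀).toReal with hgm
  have hbo : ∀ a b : ℝ, ∫ s in Ico a b, k s ∂μ₀ = (∫⁻ s in Ico a b, KK s ∂μ₀).toReal :=
    fun a b => integral_eq_lintegral_of_nonneg_ae (Eventually.of_forall fun s => hk0 s)
      hk.measurable.aestronglyMeasurable
  have hux : ∀ x, u x = u 0 + gp x - gm x := by
    intro x
    rcases le_or_gt 0 x with h | h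
    · have h1 := hu 0 x h
      rw [hbo] at h1
      have h2 : gm x = 0 := by
        rw [hgm]
        simp only [Ico_eq_empty (not_lt.2 h), Measure.restrict_empty, lintegral_zero_measure,
          ENNReal.toReal_zero]
      rw [h2, hgp]; linarith
    · have h1 := hu x 0 h.le
      rw [hbo] at h1
      have h2 : gp x = 0 := by
        rw [hgp]
        simp only [Ico_eq_empty (not_lt.2 h.le), Measure.restrict_empty, lintegral_zero_measure,
          ENNReal.toReal_zero]
      rw [h2, hgm]; linarith
  have hgpmono : Monotone gp := by
    intro x y hxy
    exact ENNReal.toReal_mono (hfin 0 y) (lintegral_mono_set (Ico_subset_Ico le_rfl hxy))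
  have hgmanti : Antitone gm := by
    intro x y hxy
    exact ENNReal.toReal_mono (hfin x 0) (lintegral_mono_set (Ico_subset_Ico hxy le_rfl))
  have hgp0 : ∀ x, 0 ≤ gp x := fun x => ENNReal.toReal_nonneg
  have hgm0 : ∀ x, 0 ≤ gm x := fun x => ENNReal.toReal_nonneg
  -- lintegral of gp against ν equals Q
  have hQ : ∫⁻ x, ENNReal.ofReal (gp x) ∂ν
      = ∫⁻ s in Ici 0, ENNReal.ofReal (k s * (1 - v₀ (F s))) ∂μ₀ := by
    have h1 : ∀ x, ENNReal.ofReal (gp x) = ∫⁻ s in Ico 0 x, KK s ∂μ₀ :=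
      fun x => ENNReal.ofReal_toReal (hfin 0 x)
    calc ∫⁻ x, ENNReal.ofReal (gp x) ∂ν = ∫⁻ x, (∫⁻ s in Ico 0 x, KK s ∂μ₀) ∂ν :=
          lintegral_congr h1
      _ = ∫⁻ s in Ici 0, KK s * ν (Ioi s) ∂μ₀ := swap_plus hKKm
      _ = ∫⁻ s in Ici 0, ENNReal.ofReal (k s * (1 - v₀ (F s))) ∂μ₀ := by
          apply lintegral_congr
          intro s
          rw [lsr_Ioi hν (vF_tendsto_atTop hp hF) s, hKK, ← ENNReal.ofReal_mul (hk0 s)]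
  have hP : ∫⁻ x, ENNReal.ofReal (gm x) ∂ν
      = ∫⁻ s in Iio 0, ENNReal.ofReal (k s * v₀ (F s)) ∂μ₀ := by
    have h1 : ∀ x, ENNReal.ofReal (gm x) = ∫⁻ s in Ico x 0, KK s ∂μ₀ :=
      fun x => ENNReal.ofReal_toReal (hfin x 0)
    calc ∫⁻ x, ENNReal.ofReal (gm x) ∂ν = ∫⁻ x, (∫⁻ s in Ico x 0, KK s ∂μ₀) ∂ν :=
          lintegral_congr h1
      _ = ∫⁻ s in Iio 0, KK s * ν (Iic s) ∂μ₀ := swap_minus hKKm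
      _ = ∫⁻ s in Iio 0, ENNReal.ofReal (k s * v₀ (F s)) ∂μ₀ := by
          apply lintegral_congr
          intro s
          rw [lsr_Iic hν (vF_tendsto_atBot hp hF) s, hKK, ← ENNReal.ofReal_mul (hk0 s)]
  have int_gp : Integrable gp ν :=
    ⟨hgpmono.measurable.aestronglyMeasurable,
      (hasFiniteIntegral_iff_ofReal (Eventually.of_forall hgp0)).2 (by rw [hQ]; exact hQfin.lt_top)⟩
  have int_gm : Integrable gm ν :=
    ⟨hgmanti.measurable.aestronglyMeasurable,
      (hasFiniteIntegral_iff_ofReal (Eventually.of_forall hgm0)).2 (by rw [hP]; exact hPfin.lt_top)⟩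
  have igp : ∫ x, gp x ∂ν
      = (∫⁻ s in Ici 0, ENNReal.ofReal (k s * (1 - v₀ (F s))) ∂μ₀).toReal := by
    rw [integral_eq_lintegral_of_nonneg_ae (Eventually.of_forall hgp0)
      hgpmono.measurable.aestronglyMeasurable, hQ]
  have igm : ∫ x, gm x ∂ν
      = (∫⁻ s in Iio 0, ENNReal.ofReal (k s * v₀ (F s)) ∂μ₀).toReal := by
    rw [integral_eq_lintegral_of_nonneg_ae (Eventually.of_forall hgm0)
      hgmanti.measurable.aestronglyMeasurable, hP]
  calc ∫ x, u x ∂ν = ∫ x, (u 0 + gp x - gm x) ∂ν := by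
        apply integral_congr_ae; exact Eventually.of_forall fun x => hux x
    _ = ∫ x, (u 0 + gp x) ∂ν - ∫ x, gm x ∂ν :=
        integral_sub ((integrable_const _).add int_gp) int_gm
    _ = (∫ _, u 0 ∂ν + ∫ x, gp x ∂ν) - ∫ x, gm x ∂ν := by
        rw [integral_add (integrable_const _) int_gp]
    _ = _ := by
        rw [integral_const, measureReal_def, hνuniv, igp, igm]; simp

/-- Splitting the withDensity lintegral at 0. -/
lemma wd_split {μ₀ : Measure ℝ} (hkm : Measurable k) (hk0 : ∀ x, 0 ≤ k x)
    {w : ℝ → ℝ} (hwm : Measurable w) :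
    ∫⁻ x, ENNReal.ofReal (w x) ∂(μ₀.withDensity fun x => ENNReal.ofReal (k x))
      = ∫⁻ s in Iio 0, ENNReal.ofReal (k s * w s) ∂μ₀
        + ∫⁻ s in Ici 0, ENNReal.ofReal (k s * w s) ∂μ₀ := by
  rw [lintegral_withDensity_eq_lintegral_mul μ₀ hkm.ennreal_ofReal hwm.ennreal_ofReal]
  have h1 : ∀ s : ℝ, ((fun x => ENNReal.ofReal (k x)) * fun x => ENNReal.ofReal (w x)) s
      = ENNReal.ofReal (k s * w s) := by
    intro s; simp only [Pi.mul_apply]; rw [← ENNReal.ofReal_mul (hk0 s)]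
  rw [lintegral_congr h1]
  rw [← lintegral_add_compl (fun s => ENNReal.ofReal (k s * w s)) measurableSet_Iio, compl_Iio]

/-- `Q + R = S` on `Ici 0`. -/
lemma QR_S (hp : StandardPair u₀ v₀) (hF : IsCDF F) {μ₀ : Measure ℝ}
    (hkm : Measurable k) (hk0 : ∀ x, 0 ≤ k x) :
    ∫⁻ s in Ici 0, ENNReal.ofReal (k s * (1 - v₀ (F s))) ∂μ₀
      + ∫⁻ s in Ici 0, ENNReal.ofReal (k s * v₀ (F s)) ∂μ₀
      = ∫⁻ s in Ici 0, ENNReal.ofReal (k s) ∂μ₀ := by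
  have hvm : Measurable (fun x => v₀ (F x)) := (vF_mono hp hF).measurable
  rw [← lintegral_add_left (show Measurable fun s => ENNReal.ofReal (k s * (1 - v₀ (F s))) from
    (hkm.mul ((measurable_const.sub hvm))).ennreal_ofReal)]
  apply lintegral_congr
  intro s
  rw [← ENNReal.ofReal_add
      (mul_nonneg (hk0 s) (by have := (vF_mem hp hF s).2; linarith))
      (mul_nonneg (hk0 s) (vF_mem hp hF s).1)]
  congr 1; ring

/-- Construction of `u` from a density `k`. -/
lemma construct_u {μ₀ : Measure ℝ} (hμ₀ : IsLSL u₀ μ₀) (hk : Antitone k)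
    (hk0 : ∀ x, 0 ≤ k x) (hkC : ∀ x, k x ≤ C) :
    HasDensity (fun x => (∫⁻ s in Ico 0 x, ENNReal.ofReal (k s) ∂μ₀).toReal
      - (∫⁻ s in Ico x 0, ENNReal.ofReal (k s) ∂μ₀).toReal) k μ₀ := by
  set KK : ℝ → ENNReal := fun s => ENNReal.ofReal (k s) with hKK
  have hfin : ∀ a b : ℝ, ∫⁻ s in Ico a b, KK s ∂μ₀ ≠ ⊤ :=
    fun a b => lint_Ico_fin hμ₀ hk0 hkC a b
  have hbo : ∀ a b : ℝ, ∫ s in Ico a b, k s ∂μ₀ = (∫⁻ s in Ico a b, KK s ∂μ₀).toReal :=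
    fun a b => integral_eq_lintegral_of_nonneg_ae (Eventually.of_forall fun s => hk0 s)
      hk.measurable.aestronglyMeasurable
  have hadd : ∀ a b c : ℝ, a ≤ b → b ≤ c →
      (∫⁻ s in Ico a c, KK s ∂μ₀).toReal
        = (∫⁻ s in Ico a b, KK s ∂μ₀).toReal + (∫⁻ s in Ico b c, KK s ∂μ₀).toReal := by
    intro a b c hab hbc
    rw [← Ico_union_Ico_eq_Ico hab hbc, lintegral_union measurableSet_Ico Ico_disjoint_Ico_same,
      ENNReal.toReal_add (hfin a b) (hfin b c)]
  intro a b hab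
  rw [hbo]
  rcases le_or_gt 0 a with h0a | h0a
  · -- 0 ≤ a ≤ b
    have e1 : Ico b (0:ℝ) = ∅ := Ico_eq_empty (not_lt.2 (le_trans h0a hab))
    have e2 : Ico a (0:ℝ) = ∅ := Ico_eq_empty (not_lt.2 h0a)
    simp only [e1, e2, Measure.restrict_empty, lintegral_zero_measure, ENNReal.toReal_zero,
      sub_zero]
    have := hadd 0 a b h0a hab
    linarith
  rcases le_or_gt 0 b with h0b | h0b
  · -- a < 0 ≤ b
    have e1 : Ico b (0:ℝ) = ∅ := Ico_eq_empty (not_lt.2 h0b)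
    have e2 : Ico (0:ℝ) a = ∅ := Ico_eq_empty (not_lt.2 h0a.le)
    simp only [e1, e2, Measure.restrict_empty, lintegral_zero_measure, ENNReal.toReal_zero,
      sub_zero, zero_sub]
    have := hadd a 0 b h0a.le h0b
    linarith
  · -- a ≤ b < 0
    have e1 : Ico (0:ℝ) b = ∅ := Ico_eq_empty (not_lt.2 h0b.le)
    have e2 : Ico (0:ℝ) a = ∅ := Ico_eq_empty (not_lt.2 h0a.le)
    simp only [e1, e2, Measure.restrict_empty, lintegral_zero_measure, ENNReal.toReal_zero,
      zero_sub]
    have := hadd a b 0 hab h0b.le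
    linarith

lemma kn_mono (hk0 : ∀ x, 0 ≤ k x) {w : ℝ → ℝ} (hw0 : ∀ x, 0 ≤ w x) :
    Monotone (fun n : ℕ => fun s => ENNReal.ofReal ((if s < (n:ℝ) then k s else 0) * w s)) := by
  intro n m hnm
  intro s
  simp only []
  apply ENNReal.ofReal_le_ofReal
  apply mul_le_mul_of_nonneg_right _ (hw0 s)
  by_cases h : s < (n:ℝ)
  · rw [if_pos h, if_pos (lt_of_lt_of_le h (Nat.cast_le.2 hnm))]
  · rw [if_neg h]
    by_cases h' : s < (m:ℝ)
    · rw [if_pos h']; exact hk0 s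
    · rw [if_neg h']

lemma trunc_sup {μ₀ : Measure ℝ} (hk : Antitone k) (hk0 : ∀ x, 0 ≤ k x)
    {w : ℝ → ℝ} (hwm : Measurable w) (hw0 : ∀ x, 0 ≤ w x) (A : Set ℝ) :
    (⨆ n : ℕ, ∫⁻ s in A, ENNReal.ofReal ((if s < (n:ℝ) then k s else 0) * w s) ∂μ₀)
      = ∫⁻ s in A, ENNReal.ofReal (k s * w s) ∂μ₀ := by
  have hknm : ∀ n : ℕ, Measurable (fun s => (if s < (n:ℝ) then k s else 0) * w s) := by
    intro n
    exact (Measurable.ite (measurableSet_lt measurable_id measurable_const)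
      hk.measurable measurable_const).mul hwm
  rw [← lintegral_iSup (fun n => (hknm n).ennreal_ofReal) (kn_mono hk0 hw0)]
  apply lintegral_congr
  intro s
  apply le_antisymm
  · apply iSup_le
    intro n
    apply ENNReal.ofReal_le_ofReal
    apply mul_le_mul_of_nonneg_right _ (hw0 s)
    by_cases h : s < (n:ℝ)
    · rw [if_pos h]
    · rw [if_neg h]; exact hk0 s
  · obtain ⟨n, hn⟩ := exists_nat_gt s
    exact le_iSup_of_le n (by rw [if_pos hn])


/-- **Theorem 1, (i) ↔ (iii).**  Let `(u₀,v₀)` be a standard pair and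
`F₁, F₂` cdf's satisfying conditions (a) and (b).  Then `F₁ ≺^{(u₀,v₀)} F₂` iff
`∫_{-∞}^{∞} u(x) dv₀(F₁(x)) ≤ ∫_{-∞}^{∞} u(x) dv₀(F₂(x))` for all `u ∈ U⁰`, i.e. all
non-decreasing `u₀`-concave `u` (having a bounded non-negative non-increasing density
`k` with respect to `du₀`). -/
theorem theorem1_i_iff_iii
    (u₀ v₀ F₁ F₂ : ℝ → ℝ) (hpair : StandardPair u₀ v₀)
    (hF₁ : IsCDF F₁) (hF₂ : IsCDF F₂)
    (μ₀ : Measure ℝ) (hμ₀ : IsLSL u₀ μ₀)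
    (ν₁ ν₂ : Measure ℝ)
    (hν₁ : IsLSR (fun x => v₀ (F₁ x)) ν₁) (hν₂ : IsLSR (fun x => v₀ (F₂ x)) ν₂)
    (ha₁ : CondA u₀ ν₁) (ha₂ : CondA u₀ ν₂)
    (lam₁ lam₂ : Measure ℝ)
    (hlam₁ : IsLSL01 (fun α => u₀ (qf F₁ α)) lam₁)
    (hlam₂ : IsLSL01 (fun α => u₀ (qf F₂ α)) lam₂)
    (hb₁ : CondB v₀ lam₁) (hb₂ : CondB v₀ lam₂) :
    UpperOrder v₀ F₁ F₂ μ₀ ↔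
    (∀ u k : ℝ → ℝ, Antitone k → (∀ x, 0 ≤ k x) → (∃ C, ∀ x, k x ≤ C) →
      HasDensity u k μ₀ →
      ∫ x, u x ∂ν₁ ≤ ∫ x, u x ∂ν₂) := by
  haveI hSF : SigmaFinite μ₀ := sigmaFinite_of_isLSL hμ₀
  haveI hFM₁ : IsFiniteMeasure ν₁ := ⟨by
    rw [lsr_univ hν₁ (vF_tendsto_atBot hpair hF₁) (vF_tendsto_atTop hpair hF₁)
      (vF_mem hpair hF₁ 0).1 (vF_mem hpair hF₁ 0).2]
    exact ENNReal.one_lt_top⟩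
  haveI hFM₂ : IsFiniteMeasure ν₂ := ⟨by
    rw [lsr_univ hν₂ (vF_tendsto_atBot hpair hF₂) (vF_tendsto_atTop hpair hF₂)
      (vF_mem hpair hF₂ 0).1 (vF_mem hpair hF₂ 0).2]
    exact ENNReal.one_lt_top⟩
  have hv₁m : Measurable (fun x => v₀ (F₁ x)) := (vF_mono hpair hF₁).measurable
  have hv₂m : Measurable (fun x => v₀ (F₂ x)) := (vF_mono hpair hF₂).measurable
  have hw₁0 : ∀ x : ℝ, 0 ≤ 1 - v₀ (F₁ x) := fun x => by linarith [(vF_mem hpair hF₁ x).2]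
  have hw₂0 : ∀ x : ℝ, 0 ≤ 1 - v₀ (F₂ x) := fun x => by linarith [(vF_mem hpair hF₂ x).2]
  constructor
  · -- (i) → (iii)
    rintro hupper u k hk hk0 ⟨C, hkC⟩ hud
    have fin₁ := key_fin hpair hF₁ hν₁ hμ₀ ha₁ hk0 hkC
    have fin₂ := key_fin hpair hF₂ hν₂ hμ₀ ha₂ hk0 hkC
    rw [key_repr hpair hF₁ hν₁ hμ₀ hk hk0 hkC fin₁.1.ne fin₁.2.ne hud,
        key_repr hpair hF₂ hν₂ hμ₀ hk hk0 hkC fin₂.1.ne fin₂.2.ne hud]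
    -- reduce to ENNReal inequality P₂ + Q₁ ≤ P₁ + Q₂
    have henn : (∫⁻ s in Iio 0, ENNReal.ofReal (k s * v₀ (F₂ s)) ∂μ₀)
        + (∫⁻ s in Ici 0, ENNReal.ofReal (k s * (1 - v₀ (F₁ s))) ∂μ₀)
        ≤ (∫⁻ s in Iio 0, ENNReal.ofReal (k s * v₀ (F₁ s)) ∂μ₀)
        + (∫⁻ s in Ici 0, ENNReal.ofReal (k s * (1 - v₀ (F₂ s))) ∂μ₀) := by
      have keyn : ∀ n : ℕ,
          (∫⁻ s in Iio 0, ENNReal.ofReal ((if s < (n:ℝ) then k s else 0) * v₀ (F₂ s)) ∂μ₀)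
          + (∫⁻ s in Ici 0, ENNReal.ofReal ((if s < (n:ℝ) then k s else 0) * (1 - v₀ (F₁ s))) ∂μ₀)
          ≤ (∫⁻ s in Iio 0, ENNReal.ofReal (k s * v₀ (F₁ s)) ∂μ₀)
          + (∫⁻ s in Ici 0, ENNReal.ofReal (k s * (1 - v₀ (F₂ s))) ∂μ₀) := by
        intro n
        set kn : ℝ → ℝ := fun s => if s < (n:ℝ) then k s else 0 with hkndef
        have hkn_anti : Antitone kn := by
          intro x y hxy
          simp only [hkndef]
          by_cases hy : y < (n:ℝ)
          · rw [if_pos hy, if_pos (lt_of_le_of_lt hxy hy)]; exact hk hxy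
          · rw [if_neg hy]
            by_cases hx : x < (n:ℝ)
            · rw [if_pos hx]; exact hk0 x
            · rw [if_neg hx]
        have hkn0 : ∀ x, 0 ≤ kn x := by
          intro x; simp only [hkndef]
          by_cases hx : x < (n:ℝ)
          · rw [if_pos hx]; exact hk0 x
          · rw [if_neg hx]
        have hknC : ∀ x, kn x ≤ C := by
          intro x; simp only [hkndef]
          by_cases hx : x < (n:ℝ)
          · rw [if_pos hx]; exact hkC x
          · rw [if_neg hx]; exact le_trans (hk0 0) (hkC 0)
        have hknle : ∀ x, kn x ≤ k x := by
          intro x; simp only [hkndef]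
          by_cases hx : x < (n:ℝ)
          · rw [if_pos hx]
          · rw [if_neg hx]; exact hk0 x
        have hknm : Measurable kn :=
          Measurable.ite (measurableSet_lt measurable_id measurable_const)
            hk.measurable measurable_const
        have h1 := hupper kn hkn_anti hkn0 ⟨C, hknC⟩
        rw [wd_split hknm hkn0 hv₂m, wd_split hknm hkn0 hv₁m] at h1
        -- Sn finite
        have hSn : ∫⁻ s in Ici 0, ENNReal.ofReal (kn s) ∂μ₀ ≠ ⊤ := by
          refine ne_of_lt (lt_of_le_of_lt (lintegral_mono fun s => ?_)
            (?_ : ∫⁻ s in Ici 0, (Iio (n:ℝ)).indicator (fun _ => ENNReal.ofReal C) s ∂μ₀ < ⊤))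
          · simp only [hkndef, indicator]
            by_cases hx : s < (n:ℝ)
            · rw [if_pos hx]; simp [mem_Iio, hx]; exact ENNReal.ofReal_le_ofReal (hkC s)
            · rw [if_neg hx]; simp
          · rw [lintegral_indicator measurableSet_Iio, setLIntegral_const,
              Measure.restrict_apply measurableSet_Iio]
            have : Iio (n:ℝ) ∩ Ici 0 = Ico (0:ℝ) (n:ℝ) := by
              ext x; simp [mem_Ico, mem_Iio, mem_Ici, and_comm]
            rw [this, hμ₀ 0 (n:ℝ) n.cast_nonneg]
            exact ENNReal.mul_lt_top ENNReal.ofReal_lt_top ENNReal.ofReal_lt_top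
        have hQR₁ := QR_S (μ₀ := μ₀) hpair hF₁ hknm hkn0
        have hQR₂ := QR_S (μ₀ := μ₀) hpair hF₂ hknm hkn0
        have hcancel :
            ((∫⁻ s in Iio 0, ENNReal.ofReal (kn s * v₀ (F₂ s)) ∂μ₀)
              + (∫⁻ s in Ici 0, ENNReal.ofReal (kn s * (1 - v₀ (F₁ s))) ∂μ₀))
              + (∫⁻ s in Ici 0, ENNReal.ofReal (kn s) ∂μ₀)
            ≤ ((∫⁻ s in Iio 0, ENNReal.ofReal (kn s * v₀ (F₁ s)) ∂μ₀)
              + (∫⁻ s in Ici 0, ENNReal.ofReal (kn s * (1 - v₀ (F₂ s))) ∂μ₀))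
              + (∫⁻ s in Ici 0, ENNReal.ofReal (kn s) ∂μ₀) := by
          calc ((∫⁻ s in Iio 0, ENNReal.ofReal (kn s * v₀ (F₂ s)) ∂μ₀)
              + (∫⁻ s in Ici 0, ENNReal.ofReal (kn s * (1 - v₀ (F₁ s))) ∂μ₀))
              + (∫⁻ s in Ici 0, ENNReal.ofReal (kn s) ∂μ₀)
              = ((∫⁻ s in Iio 0, ENNReal.ofReal (kn s * v₀ (F₂ s)) ∂μ₀)
                + (∫⁻ s in Ici 0, ENNReal.ofReal (kn s * v₀ (F₂ s)) ∂μ₀))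
                + ((∫⁻ s in Ici 0, ENNReal.ofReal (kn s * (1 - v₀ (F₁ s))) ∂μ₀)
                  + (∫⁻ s in Ici 0, ENNReal.ofReal (kn s * (1 - v₀ (F₂ s))) ∂μ₀)) := by
                rw [← hQR₂]; ring
            _ ≤ ((∫⁻ s in Iio 0, ENNReal.ofReal (kn s * v₀ (F₁ s)) ∂μ₀)
                + (∫⁻ s in Ici 0, ENNReal.ofReal (kn s * v₀ (F₁ s)) ∂μ₀))
                + ((∫⁻ s in Ici 0, ENNReal.ofReal (kn s * (1 - v₀ (F₁ s))) ∂μ₀)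
                  + (∫⁻ s in Ici 0, ENNReal.ofReal (kn s * (1 - v₀ (F₂ s))) ∂μ₀)) :=
                add_le_add h1 le_rfl
            _ = _ := by rw [← hQR₁]; ring
        have hn2 := (ENNReal.add_le_add_iff_right hSn).1 hcancel
        refine le_trans hn2 (add_le_add (lintegral_mono fun s => ?_) (lintegral_mono fun s => ?_))
        · exact ENNReal.ofReal_le_ofReal
            (mul_le_mul_of_nonneg_right (hknle s) (vF_mem hpair hF₁ s).1)
        · exact ENNReal.ofReal_le_ofReal
            (mul_le_mul_of_nonneg_right (hknle s) (hw₂0 s))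
      have hm₂ : Monotone (fun n : ℕ =>
          ∫⁻ s in Iio 0, ENNReal.ofReal ((if s < (n:ℝ) then k s else 0) * v₀ (F₂ s)) ∂μ₀) :=
        fun n m hnm => lintegral_mono fun s =>
          kn_mono hk0 (fun x => (vF_mem hpair hF₂ x).1) hnm s
      have hm₁ : Monotone (fun n : ℕ =>
          ∫⁻ s in Ici 0, ENNReal.ofReal ((if s < (n:ℝ) then k s else 0) * (1 - v₀ (F₁ s))) ∂μ₀) :=
        fun n m hnm => lintegral_mono fun s => kn_mono hk0 hw₁0 hnm s
      calc (∫⁻ s in Iio 0, ENNReal.ofReal (k s * v₀ (F₂ s)) ∂μ₀)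
          + (∫⁻ s in Ici 0, ENNReal.ofReal (k s * (1 - v₀ (F₁ s))) ∂μ₀)
          = (⨆ n : ℕ, ∫⁻ s in Iio 0,
              ENNReal.ofReal ((if s < (n:ℝ) then k s else 0) * v₀ (F₂ s)) ∂μ₀)
            + (⨆ n : ℕ, ∫⁻ s in Ici 0,
              ENNReal.ofReal ((if s < (n:ℝ) then k s else 0) * (1 - v₀ (F₁ s))) ∂μ₀) := by
            rw [trunc_sup hk hk0 hv₂m (fun x => (vF_mem hpair hF₂ x).1) (Iio 0),
              trunc_sup hk hk0 (show Measurable fun x => 1 - v₀ (F₁ x) from measurable_const.sub hv₁m) hw₁0 (Ici 0)]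
        _ = ⨆ n : ℕ, ((∫⁻ s in Iio 0,
              ENNReal.ofReal ((if s < (n:ℝ) then k s else 0) * v₀ (F₂ s)) ∂μ₀)
            + (∫⁻ s in Ici 0,
              ENNReal.ofReal ((if s < (n:ℝ) then k s else 0) * (1 - v₀ (F₁ s))) ∂μ₀)) :=
            ENNReal.iSup_add_iSup_of_monotone hm₂ hm₁
        _ ≤ _ := iSup_le keyn
    have hne : (∫⁻ s in Iio 0, ENNReal.ofReal (k s * v₀ (F₁ s)) ∂μ₀)
        + (∫⁻ s in Ici 0, ENNReal.ofReal (k s * (1 - v₀ (F₂ s))) ∂μ₀) ≠ ⊤ :=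
      (ENNReal.add_lt_top.2 ⟨fin₁.1, fin₂.2⟩).ne
    have h2 := ENNReal.toReal_mono hne henn
    rw [ENNReal.toReal_add fin₂.1.ne fin₁.2.ne, ENNReal.toReal_add fin₁.1.ne fin₂.2.ne] at h2
    linarith
  · -- (iii) → (i)
    rintro hiii k hk hk0 ⟨C, hkC⟩
    have hud := construct_u hμ₀ hk hk0 hkC
    have fin₁ := key_fin hpair hF₁ hν₁ hμ₀ ha₁ hk0 hkC
    have fin₂ := key_fin hpair hF₂ hν₂ hμ₀ ha₂ hk0 hkC
    have hineq := hiii _ k hk hk0 ⟨C, hkC⟩ hud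
    rw [key_repr hpair hF₁ hν₁ hμ₀ hk hk0 hkC fin₁.1.ne fin₁.2.ne hud,
        key_repr hpair hF₂ hν₂ hμ₀ hk hk0 hkC fin₂.1.ne fin₂.2.ne hud] at hineq
    have hreal : (∫⁻ s in Ici 0, ENNReal.ofReal (k s * (1 - v₀ (F₁ s))) ∂μ₀).toReal
        + (∫⁻ s in Iio 0, ENNReal.ofReal (k s * v₀ (F₂ s)) ∂μ₀).toReal
        ≤ (∫⁻ s in Ici 0, ENNReal.ofReal (k s * (1 - v₀ (F₂ s))) ∂μ₀).toReal
        + (∫⁻ s in Iio 0, ENNReal.ofReal (k s * v₀ (F₁ s)) ∂μ₀).toReal := by linarith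
    have henn : (∫⁻ s in Ici 0, ENNReal.ofReal (k s * (1 - v₀ (F₁ s))) ∂μ₀)
        + (∫⁻ s in Iio 0, ENNReal.ofReal (k s * v₀ (F₂ s)) ∂μ₀)
        ≤ (∫⁻ s in Ici 0, ENNReal.ofReal (k s * (1 - v₀ (F₂ s))) ∂μ₀)
        + (∫⁻ s in Iio 0, ENNReal.ofReal (k s * v₀ (F₁ s)) ∂μ₀) := by
      calc (∫⁻ s in Ici 0, ENNReal.ofReal (k s * (1 - v₀ (F₁ s))) ∂μ₀)
          + (∫⁻ s in Iio 0, ENNReal.ofReal (k s * v₀ (F₂ s)) ∂μ₀)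
          = ENNReal.ofReal ((∫⁻ s in Ici 0, ENNReal.ofReal (k s * (1 - v₀ (F₁ s))) ∂μ₀).toReal
            + (∫⁻ s in Iio 0, ENNReal.ofReal (k s * v₀ (F₂ s)) ∂μ₀).toReal) := by
            rw [ENNReal.ofReal_add ENNReal.toReal_nonneg ENNReal.toReal_nonneg,
              ENNReal.ofReal_toReal fin₁.2.ne, ENNReal.ofReal_toReal fin₂.1.ne]
        _ ≤ ENNReal.ofReal ((∫⁻ s in Ici 0, ENNReal.ofReal (k s * (1 - v₀ (F₂ s))) ∂μ₀).toReal
            + (∫⁻ s in Iio 0, ENNReal.ofReal (k s * v₀ (F₁ s)) ∂μ₀).toReal) :=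
            ENNReal.ofReal_le_ofReal hreal
        _ = _ := by
            rw [ENNReal.ofReal_add ENNReal.toReal_nonneg ENNReal.toReal_nonneg,
              ENNReal.ofReal_toReal fin₂.2.ne, ENNReal.ofReal_toReal fin₁.1.ne]
    rw [wd_split hk.measurable hk0 hv₂m, wd_split hk.measurable hk0 hv₁m]
    have hQQ : (∫⁻ s in Ici 0, ENNReal.ofReal (k s * (1 - v₀ (F₁ s))) ∂μ₀)
        + (∫⁻ s in Ici 0, ENNReal.ofReal (k s * (1 - v₀ (F₂ s))) ∂μ₀) ≠ ⊤ :=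
      (ENNReal.add_lt_top.2 ⟨fin₁.2, fin₂.2⟩).ne
    refine (ENNReal.add_le_add_iff_right hQQ).1 ?_
    have hQR₁ := QR_S (μ₀ := μ₀) hpair hF₁ hk.measurable hk0
    have hQR₂ := QR_S (μ₀ := μ₀) hpair hF₂ hk.measurable hk0
    calc ((∫⁻ s in Iio 0, ENNReal.ofReal (k s * v₀ (F₂ s)) ∂μ₀)
          + (∫⁻ s in Ici 0, ENNReal.ofReal (k s * v₀ (F₂ s)) ∂μ₀))
          + ((∫⁻ s in Ici 0, ENNReal.ofReal (k s * (1 - v₀ (F₁ s))) ∂μ₀)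
            + (∫⁻ s in Ici 0, ENNReal.ofReal (k s * (1 - v₀ (F₂ s))) ∂μ₀))
        = ((∫⁻ s in Ici 0, ENNReal.ofReal (k s * (1 - v₀ (F₁ s))) ∂μ₀)
            + (∫⁻ s in Iio 0, ENNReal.ofReal (k s * v₀ (F₂ s)) ∂μ₀))
          + ((∫⁻ s in Ici 0, ENNReal.ofReal (k s * (1 - v₀ (F₂ s))) ∂μ₀)
            + (∫⁻ s in Ici 0, ENNReal.ofReal (k s * v₀ (F₂ s)) ∂μ₀)) := by ring
      _ = ((∫⁻ s in Ici 0, ENNReal.ofReal (k s * (1 - v₀ (F₁ s))) ∂μ₀)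
            + (∫⁻ s in Iio 0, ENNReal.ofReal (k s * v₀ (F₂ s)) ∂μ₀))
          + (∫⁻ s in Ici 0, ENNReal.ofReal (k s) ∂μ₀) := by rw [hQR₂]
      _ ≤ ((∫⁻ s in Ici 0, ENNReal.ofReal (k s * (1 - v₀ (F₂ s))) ∂μ₀)
            + (∫⁻ s in Iio 0, ENNReal.ofReal (k s * v₀ (F₁ s)) ∂μ₀))
          + (∫⁻ s in Ici 0, ENNReal.ofReal (k s) ∂μ₀) := add_le_add henn le_rfl
      _ = ((∫⁻ s in Ici 0, ENNReal.ofReal (k s * (1 - v₀ (F₂ s))) ∂μ₀)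
            + (∫⁻ s in Iio 0, ENNReal.ofReal (k s * v₀ (F₁ s)) ∂μ₀))
          + ((∫⁻ s in Ici 0, ENNReal.ofReal (k s * (1 - v₀ (F₁ s))) ∂μ₀)
            + (∫⁻ s in Ici 0, ENNReal.ofReal (k s * v₀ (F₁ s)) ∂μ₀)) := by rw [hQR₁]
      _ = _ := by ring


end
end
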